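/- arXiv:1702.08447 — 3 statements merged into one kernel-verified Lean document; each statement's English description precedes it below -/
import Mathlib

section
/- Let N and K be positive integers, let σ : Fin N → Fin N be a fixed-point-free involution (a permutation with σ ∘ σ = id and σ i ≠ i for all i), let p : Fin K → [0,1] be a probability vector (∑_k p_k = 1), and let (W_i)_{i∈Fin N} be i.i.d. Fin K-valued random variables with P(W_i = k) = p_k for all i and k. Then for every m, ℓ ∈ Fin K and every ε > 0: P( | (1/N) ∑_{i∈Fin N} 1{W_i = m}·1{W_{σ i} = ℓ} − p_m p_ℓ | > ε ) ≤ 2 exp(−N ε²). -/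
open MeasureTheory ProbabilityTheory

lemma bernoulli_mgf_bound (θ s : ℝ) (h0 : 0 ≤ θ) (h1 : θ ≤ 1) :
    1 - θ + θ * Real.exp s ≤ Real.exp (θ * s + s ^ 2 / 8) := by
  rcases eq_or_lt_of_le h0 with h0' | h0'
  · rw [← h0']
    norm_num
    positivity
  rcases eq_or_lt_of_le h1 with h1' | h1'
  · subst h1'
    have : Real.exp s ≤ Real.exp (1 * s + s ^ 2 / 8) := by
      apply Real.exp_le_exp.mpr; nlinarith [sq_nonneg s]
    nlinarith [this]
  -- main case 0 < θ < 1
  set D : ℝ → ℝ := fun x => 1 - θ + θ * Real.exp x with hDdef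
  have hD : ∀ x, 0 < D x := fun x => by
    have := Real.exp_pos x; simp only [hDdef]; nlinarith
  have hDd : ∀ x, HasDerivAt D (θ * Real.exp x) x := fun x =>
    ((Real.hasDerivAt_exp x).const_mul θ).const_add (1 - θ)
  set g : ℝ → ℝ := fun x => θ * Real.exp x / D x with hgdef
  set F : ℝ → ℝ := fun x => θ + x / 4 - g x with hFdef
  set f : ℝ → ℝ := fun x => θ * x + x ^ 2 / 8 - Real.log (D x) with hfdef
  have hfd : ∀ x, HasDerivAt f (F x) x := by
    intro x
    have h1' : HasDerivAt (fun x : ℝ => θ * x) θ x := by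
      simpa using (hasDerivAt_id x).const_mul θ
    have h2' : HasDerivAt (fun x : ℝ => x ^ 2 / 8) (x / 4) x := by
      have := (hasDerivAt_pow 2 x).div_const 8
      refine this.congr_deriv ?_; norm_num; ring
    have h3' : HasDerivAt (fun x => Real.log (D x)) (θ * Real.exp x / D x) x :=
      (hDd x).log (hD x).ne'
    exact (h1'.add h2').sub h3'
  have hgd : ∀ x, HasDerivAt g (θ * Real.exp x * (1 - θ) / (D x) ^ 2) x := by
    intro x
    have := ((Real.hasDerivAt_exp x).const_mul θ).div (hDd x) (hD x).ne'
    refine this.congr_deriv ?_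
    have hne := (hD x).ne'
    congr 1
    simp only [hDdef]
    ring
  have hFd : ∀ x, HasDerivAt F (1 / 4 - θ * Real.exp x * (1 - θ) / (D x) ^ 2) x := by
    intro x
    have h2' : HasDerivAt (fun x : ℝ => θ + x / 4) (1 / 4) x := by
      simpa using ((hasDerivAt_id x).div_const 4).const_add θ
    exact h2'.sub (hgd x)
  have hFnn : ∀ x, 0 ≤ 1 / 4 - θ * Real.exp x * (1 - θ) / (D x) ^ 2 := by
    intro x
    have hDeq : D x = 1 - θ + θ * Real.exp x := rfl
    have key : 4 * (θ * Real.exp x * (1 - θ)) ≤ (D x) ^ 2 := by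
      rw [hDeq]; nlinarith [sq_nonneg ((1 - θ) - θ * Real.exp x)]
    have h2 : θ * Real.exp x * (1 - θ) / (D x) ^ 2 ≤ 1 / 4 := by
      rw [div_le_iff₀ (pow_pos (hD x) 2), hDeq] at *
      rw [hDeq] at key
      linarith
    exact sub_nonneg.mpr h2
  have hFmono : Monotone F :=
    monotone_of_deriv_nonneg (fun x => (hFd x).differentiableAt)
      (fun x => by rw [(hFd x).deriv]; exact hFnn x)
  have hF0 : F 0 = 0 := by
    simp only [hFdef, hgdef, hDdef, Real.exp_zero, mul_one]
    have : 1 - θ + θ = 1 := by ring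
    rw [this]; simp
  have hf0 : f 0 = 0 := by
    simp only [hfdef, hDdef, Real.exp_zero, mul_one, mul_zero]
    have : 1 - θ + θ = 1 := by ring
    rw [this]; simp
  have hfc : Continuous f := by
    have : Differentiable ℝ f := fun x => (hfd x).differentiableAt
    exact this.continuous
  have hfnn : ∀ x, 0 ≤ f x := by
    intro x
    rcases lt_trichotomy x 0 with hx | hx | hx
    · obtain ⟨c, hc, hceq⟩ := exists_hasDerivAt_eq_slope f F hx hfc.continuousOn
        (fun y _ => hfd y)
      have hc0 : F c ≤ 0 := hF0 ▸ hFmono (le_of_lt hc.2)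
      rw [hceq, hf0] at hc0
      have hxpos : (0:ℝ) < 0 - x := by linarith
      have := (div_nonpos_iff.mp hc0)
      rcases this with ⟨h1', _⟩ | ⟨_, h2'⟩
      · linarith
      · linarith
    · rw [hx]; exact le_of_eq hf0.symm
    · obtain ⟨c, hc, hceq⟩ := exists_hasDerivAt_eq_slope f F hx hfc.continuousOn
        (fun y _ => hfd y)
      have hc0 : 0 ≤ F c := hF0 ▸ hFmono (le_of_lt hc.1)
      rw [hceq, hf0] at hc0
      have hxpos : (0:ℝ) < x - 0 := by linarith
      have := (div_nonneg_iff.mp hc0)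
      rcases this with ⟨h1', _⟩ | ⟨_, h2'⟩
      · linarith
      · linarith
  have hlog : Real.log (D s) ≤ θ * s + s ^ 2 / 8 := by
    have := hfnn s; simp only [hfdef] at this; linarith
  calc 1 - θ + θ * Real.exp s = D s := rfl
    _ = Real.exp (Real.log (D s)) := (Real.exp_log (hD s)).symm
    _ ≤ Real.exp (θ * s + s ^ 2 / 8) := Real.exp_le_exp.mpr hlog

/-- The single-matching concentration step in the proof of Lemma 4.1 of the
paper: if `σ` is a fixed-point-free involution of `Fin N` (encoding a perfect
matching) and the `(W i)_i` are i.i.d. `Fin K`-valued with law `p`, then the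
normalized count `(1/N) ∑ i, 1{W i = m} 1{W (σ i) = ℓ}` concentrates at
`p m * p ℓ` with bound `2 exp (-N ε²)`, uniformly in `p`. -/
theorem single_matching_concentration
    {Ω : Type*} [MeasurableSpace Ω] (μ : Measure Ω) [IsProbabilityMeasure μ]
    (N K : ℕ) (hN : 0 < N) (hK : 0 < K)
    (σ : Fin N → Fin N) (hσinv : ∀ i, σ (σ i) = i) (hσnf : ∀ i, σ i ≠ i)
    (p : Fin K → ℝ) (hp0 : ∀ k, 0 ≤ p k) (hp1 : ∀ k, p k ≤ 1)
    (hpsum : ∑ k, p k = 1)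
    (W : Fin N → Ω → Fin K) (hWmeas : ∀ i, Measurable (W i))
    -- the `W i` are independent and identically distributed with law `p`:
    (hindep : iIndepFun W μ)
    (hlaw : ∀ i k, μ {ω | W i ω = k} = ENNReal.ofReal (p k))
    (m ℓ : Fin K) (ε : ℝ) (hε : 0 < ε) :
    μ {ω | ε <
        |(1 / (N : ℝ)) * ∑ i : Fin N,
          (if W i ω = m then (1 : ℝ) else 0) *
            (if W (σ i) ω = ℓ then (1 : ℝ) else 0) - p m * p ℓ|} ≤
      ENNReal.ofReal (2 * Real.exp (-(N : ℝ) * ε ^ 2)) := by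
  classical
  have hNpos : (0:ℝ) < N := by exact_mod_cast hN
  have hq0 : 0 ≤ p m * p ℓ := mul_nonneg (hp0 m) (hp0 ℓ)
  have hq1 : p m * p ℓ ≤ 1 := mul_le_one₀ (hp1 m) (hp0 ℓ) (hp1 ℓ)
  have hσinj : Function.Injective σ := fun a b hab => by
    have h := congrArg σ hab; rwa [hσinv, hσinv] at h
  set Y : Fin N → Ω → ℝ := fun i ω =>
      (if W i ω = m then (1:ℝ) else 0) * (if W (σ i) ω = ℓ then (1:ℝ) else 0) +
      (if W (σ i) ω = m then (1:ℝ) else 0) * (if W i ω = ℓ then (1:ℝ) else 0) with hYdef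
  set R : Finset (Fin N) := Finset.univ.filter (fun i => i < σ i) with hRdef
  have hmemR : ∀ i, i ∈ R ↔ i < σ i := fun i => by simp [hRdef]
  -- cardinality : 2 * |R| = N
  have hcard : R.card + R.card = N := by
    have h1 : (Finset.univ.filter (fun i => i < σ i)).card +
        (Finset.univ.filter (fun i => ¬ i < σ i)).card = N := by
      rw [Finset.card_filter_add_card_filter_not]
      simp
    have h2 : (Finset.univ.filter (fun i => ¬ i < σ i)).card = R.card := by
      apply Finset.card_bij (fun i _ => σ i)
      · intro a ha
        simp only [Finset.mem_filter, Finset.mem_univ, true_and] at ha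
        rw [hmemR, hσinv]
        exact lt_of_le_of_ne (not_lt.mp ha) (hσnf a)
      · intro a _ b _ hab; exact hσinj hab
      · intro b hb
        rw [hmemR] at hb
        refine ⟨σ b, ?_, hσinv b⟩
        simp only [Finset.mem_filter, Finset.mem_univ, true_and, hσinv]
        exact not_lt.mpr hb.le
    rw [hRdef] at *
    omega
  -- sum identity
  have hsumid : ∀ ω, (∑ i : Fin N, (if W i ω = m then (1:ℝ) else 0) *
      (if W (σ i) ω = ℓ then (1:ℝ) else 0)) = ∑ i ∈ R, Y i ω := by
    intro ω
    rw [← Finset.sum_filter_add_sum_filter_not Finset.univ (fun i => i < σ i)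
      (fun i => (if W i ω = m then (1:ℝ) else 0) * (if W (σ i) ω = ℓ then (1:ℝ) else 0))]
    have h2 : ∑ i ∈ Finset.univ.filter (fun i => ¬ i < σ i),
        (if W i ω = m then (1:ℝ) else 0) * (if W (σ i) ω = ℓ then (1:ℝ) else 0) =
        ∑ i ∈ R, (if W (σ i) ω = m then (1:ℝ) else 0) * (if W i ω = ℓ then (1:ℝ) else 0) := by
      apply Finset.sum_bij (fun (i : Fin N) _ => σ i)
      · intro a ha
        simp only [Finset.mem_filter, Finset.mem_univ, true_and] at ha
        rw [hmemR, hσinv]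
        exact lt_of_le_of_ne (not_lt.mp ha) (hσnf a)
      · intro a _ b _ hab; exact hσinj hab
      · intro b hb
        rw [hmemR] at hb
        refine ⟨σ b, ?_, hσinv b⟩
        simp only [Finset.mem_filter, Finset.mem_univ, true_and, hσinv]
        exact not_lt.mpr hb.le
      · intro a _
        rw [hσinv]
    rw [h2, ← Finset.sum_add_distrib]
  -- measurability
  have hsetmeas : ∀ (i : Fin N) (k : Fin K), MeasurableSet {ω | W i ω = k} :=
    fun i k => (hWmeas i) (measurableSet_singleton k)
  have hYmeas : ∀ i, Measurable (Y i) := by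
    intro i
    apply Measurable.add
    · exact (Measurable.ite (hsetmeas i m) measurable_const measurable_const).mul
        (Measurable.ite (hsetmeas (σ i) ℓ) measurable_const measurable_const)
    · exact (Measurable.ite (hsetmeas (σ i) m) measurable_const measurable_const).mul
        (Measurable.ite (hsetmeas i ℓ) measurable_const measurable_const)
  have hYbdd : ∀ i ω, 0 ≤ Y i ω ∧ Y i ω ≤ 2 := by
    intro i ω
    simp only [hYdef]
    constructor <;> split_ifs <;> norm_num
  -- integrability
  have hint : ∀ (t : ℝ) (s : Finset (Fin N)),
      Integrable (fun ω => Real.exp (t * ∑ i ∈ s, Y i ω)) μ := by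
    intro t s
    have hmeas : Measurable fun ω => Real.exp (t * ∑ i ∈ s, Y i ω) :=
      ((Finset.measurable_sum s (fun i _ => hYmeas i)).const_mul t).exp
    refine Integrable.mono' (integrable_const (Real.exp (|t| * (2 * s.card))))
      hmeas.aestronglyMeasurable (ae_of_all _ fun ω => ?_)
    rw [Real.norm_eq_abs, Real.abs_exp]
    apply Real.exp_le_exp.mpr
    calc t * ∑ i ∈ s, Y i ω ≤ |t * ∑ i ∈ s, Y i ω| := le_abs_self _
      _ = |t| * |∑ i ∈ s, Y i ω| := abs_mul _ _
      _ ≤ |t| * (2 * s.card) := by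
          apply mul_le_mul_of_nonneg_left _ (abs_nonneg t)
          rw [abs_of_nonneg (Finset.sum_nonneg fun i _ => (hYbdd i ω).1)]
          calc ∑ i ∈ s, Y i ω ≤ ∑ _i ∈ s, (2:ℝ) :=
                Finset.sum_le_sum fun i _ => (hYbdd i ω).2
            _ = 2 * s.card := by rw [Finset.sum_const, nsmul_eq_mul]; ring
  -- product formula over disjoint pairs
  have hItemeas : ∀ (J : Finset (Fin N)) (c : {x // x ∈ J}) (k : Fin K),
      Measurable (fun v : (∀ _i : {x // x ∈ J}, Fin K) => if v c = k then (1:ℝ) else 0) := by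
    intro J c k
    have hm : Measurable (fun v : (∀ _i : {x // x ∈ J}, Fin K) => v c) :=
      measurable_pi_apply c
    have h : MeasurableSet {v : ∀ _i : {x // x ∈ J}, Fin K | v c = k} := by
      exact hm (measurableSet_singleton k)
    exact Measurable.ite h measurable_const measurable_const
  have hprod : ∀ (t : ℝ) (s : Finset (Fin N)), (∀ i ∈ s, i < σ i) →
      ∫ ω, ∏ i ∈ s, Real.exp (t * Y i ω) ∂μ = ∏ i ∈ s, ∫ ω, Real.exp (t * Y i ω) ∂μ := by
    intro t s
    induction s using Finset.cons_induction with
    | empty => intro _; simp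
    | @cons j s hj IH =>
      intro hsub
      have hjR : j < σ j := hsub j (Finset.mem_cons_self j s)
      have hsR : ∀ i ∈ s, i < σ i := fun i hi => hsub i (Finset.mem_cons.mpr (Or.inr hi))
      have hdisj : Disjoint ({j, σ j} : Finset (Fin N)) (s ∪ s.image σ) := by
        rw [Finset.disjoint_left]
        intro a haS haT
        rw [Finset.mem_insert, Finset.mem_singleton] at haS
        rw [Finset.mem_union] at haT
        rcases haS with rfl | rfl
        · rcases haT with h | h
          · exact hj h
          · obtain ⟨b, hb, hbeq⟩ := Finset.mem_image.mp h
            have hbR : b < σ b := hsR b hb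
            have hba : b = σ a := by rw [← hbeq, hσinv]
            rw [hbeq] at hbR
            rw [hba] at hbR
            exact lt_asymm hbR hjR
        · rcases haT with h | h
          · have : σ j < σ (σ j) := hsR (σ j) h
            rw [hσinv] at this
            exact absurd hjR (not_lt.mpr this.le)
          · obtain ⟨b, hb, hbeq⟩ := Finset.mem_image.mp h
            have : b = j := hσinj hbeq
            rw [this] at hb
            exact hj hb
      have hbase := hindep.indepFun_finset ({j, σ j} : Finset (Fin N)) (s ∪ s.image σ)
        hdisj hWmeas
      have hjm1 : j ∈ ({j, σ j} : Finset (Fin N)) := Finset.mem_insert_self _ _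
      have hjm2 : σ j ∈ ({j, σ j} : Finset (Fin N)) :=
        Finset.mem_insert_of_mem (Finset.mem_singleton_self _)
      set gS : (∀ _i : {x // x ∈ ({j, σ j} : Finset (Fin N))}, Fin K) → ℝ := fun v =>
        Real.exp (t * ((if v ⟨j, hjm1⟩ = m then (1:ℝ) else 0) *
          (if v ⟨σ j, hjm2⟩ = ℓ then (1:ℝ) else 0) +
          (if v ⟨σ j, hjm2⟩ = m then (1:ℝ) else 0) *
          (if v ⟨j, hjm1⟩ = ℓ then (1:ℝ) else 0))) with hgSdef
      have hgSmeas : Measurable gS := by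
        apply Measurable.exp
        apply Measurable.const_mul
        exact ((hItemeas _ ⟨j, hjm1⟩ m).mul (hItemeas _ ⟨σ j, hjm2⟩ ℓ)).add
          ((hItemeas _ ⟨σ j, hjm2⟩ m).mul (hItemeas _ ⟨j, hjm1⟩ ℓ))
      have hmemT1 : ∀ i : {x // x ∈ s}, (i : Fin N) ∈ s ∪ s.image σ :=
        fun i => Finset.mem_union_left _ i.2
      have hmemT2 : ∀ i : {x // x ∈ s}, σ (i : Fin N) ∈ s ∪ s.image σ :=
        fun i => Finset.mem_union_right _ (Finset.mem_image_of_mem σ i.2)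
      set gT : (∀ _i : {x // x ∈ (s ∪ s.image σ : Finset (Fin N))}, Fin K) → ℝ := fun v =>
        ∏ i ∈ s.attach,
          Real.exp (t * ((if v ⟨i.1, hmemT1 i⟩ = m then (1:ℝ) else 0) *
            (if v ⟨σ i.1, hmemT2 i⟩ = ℓ then (1:ℝ) else 0) +
            (if v ⟨σ i.1, hmemT2 i⟩ = m then (1:ℝ) else 0) *
            (if v ⟨i.1, hmemT1 i⟩ = ℓ then (1:ℝ) else 0))) with hgTdef
      have hgTmeas : Measurable gT := by
        apply Finset.measurable_prod
        intro i _
        apply Measurable.exp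
        apply Measurable.const_mul
        exact ((hItemeas _ _ m).mul (hItemeas _ _ ℓ)).add
          ((hItemeas _ _ m).mul (hItemeas _ _ ℓ))
      have hindep2 : IndepFun (fun ω => Real.exp (t * Y j ω))
          (fun ω => ∏ i ∈ s, Real.exp (t * Y i ω)) μ := by
        have h := hbase.comp hgSmeas hgTmeas
        have e1 : (gS ∘ fun a (i : {x // x ∈ ({j, σ j} : Finset (Fin N))}) => W i a) =
            fun ω => Real.exp (t * Y j ω) := by
          funext ω
          simp only [Function.comp_apply, hgSdef, hYdef]
        have e2 : (gT ∘ fun a (i : {x // x ∈ (s ∪ s.image σ : Finset (Fin N))}) => W i a) =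
            fun ω => ∏ i ∈ s, Real.exp (t * Y i ω) := by
          funext ω
          simp only [Function.comp_apply, hgTdef]
          rw [← Finset.prod_attach s (fun i => Real.exp (t * Y i ω))]
        rwa [e1, e2] at h
      have meas1 : Measurable fun ω => Real.exp (t * Y j ω) := ((hYmeas j).const_mul t).exp
      have meas2 : Measurable fun ω => ∏ i ∈ s, Real.exp (t * Y i ω) :=
        Finset.measurable_prod s (fun i _ => ((hYmeas i).const_mul t).exp)
      calc ∫ ω, ∏ i ∈ Finset.cons j s hj, Real.exp (t * Y i ω) ∂μ
          = ∫ ω, Real.exp (t * Y j ω) * ∏ i ∈ s, Real.exp (t * Y i ω) ∂μ := by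
            simp_rw [Finset.prod_cons]
        _ = (∫ ω, Real.exp (t * Y j ω) ∂μ) * ∫ ω, ∏ i ∈ s, Real.exp (t * Y i ω) ∂μ :=
            hindep2.integral_fun_mul_eq_mul_integral meas1.aestronglyMeasurable meas2.aestronglyMeasurable
        _ = ∏ i ∈ Finset.cons j s hj, ∫ ω, Real.exp (t * Y i ω) ∂μ := by
            rw [IH hsR, Finset.prod_cons]
  -- joint law of a pair
  have hAB : ∀ (i : Fin N) (a b : Fin K),
      μ ({ω | W i ω = a} ∩ {ω | W (σ i) ω = b}) = ENNReal.ofReal (p a * p b) := by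
    intro i a b
    have hii : IndepFun (W i) (W (σ i)) μ := hindep.indepFun (Ne.symm (hσnf i))
    have h := hii.measure_inter_preimage_eq_mul {a} {b}
      (measurableSet_singleton a) (measurableSet_singleton b)
    have e1 : W i ⁻¹' {a} = {ω | W i ω = a} := rfl
    have e2 : W (σ i) ⁻¹' {b} = {ω | W (σ i) ω = b} := rfl
    rw [e1, e2] at h
    rw [h, hlaw i a, hlaw (σ i) b, ← ENNReal.ofReal_mul (hp0 a)]
  have hABr : ∀ (i : Fin N) (a b : Fin K),
      (μ ({ω | W i ω = a} ∩ {ω | W (σ i) ω = b})).toReal = p a * p b := by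
    intro i a b; rw [hAB]; exact ENNReal.toReal_ofReal (mul_nonneg (hp0 a) (hp0 b))
  -- per-pair mgf bound
  have hpairexp : ∀ (t : ℝ) (i : Fin N),
      ∫ ω, Real.exp (t * Y i ω) ∂μ ≤ Real.exp (2 * (p m * p ℓ) * t + t ^ 2 / 2) := by
    intro t i
    by_cases hml : m = ℓ
    · subst hml
      have hC : MeasurableSet ({ω | W i ω = m} ∩ {ω | W (σ i) ω = m}) :=
        (hsetmeas i m).inter (hsetmeas (σ i) m)
      have hptw : ∀ ω, Real.exp (t * Y i ω) =
          1 + (Real.exp (2 * t) - 1) *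
            Set.indicator ({ω | W i ω = m} ∩ {ω | W (σ i) ω = m}) (fun _ => (1:ℝ)) ω := by
        intro ω
        by_cases h1 : W i ω = m <;> by_cases h2 : W (σ i) ω = m
        · have hY2 : Y i ω = 2 := by simp [hYdef, h1, h2]; norm_num
          have hmem : ω ∈ ({ω | W i ω = m} ∩ {ω | W (σ i) ω = m}) := ⟨h1, h2⟩
          rw [hY2, Set.indicator_of_mem hmem, mul_comm t 2]
          ring
        all_goals
        · have hY0 : Y i ω = 0 := by simp [hYdef, h1, h2]
          have hmem : ω ∉ ({ω | W i ω = m} ∩ {ω | W (σ i) ω = m}) := by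
            simp only [Set.mem_inter_iff, Set.mem_setOf_eq]
            tauto
          rw [hY0, Set.indicator_of_notMem hmem, mul_zero, Real.exp_zero]
          ring
      have hIind : Integrable
          (Set.indicator ({ω | W i ω = m} ∩ {ω | W (σ i) ω = m}) (fun _ => (1:ℝ))) μ :=
        (integrable_const (1:ℝ)).indicator hC
      have hval : ∫ ω, Real.exp (t * Y i ω) ∂μ = 1 + (Real.exp (2*t) - 1) * (p m * p m) := by
        rw [integral_congr_ae (ae_of_all _ hptw),
          integral_add (integrable_const 1) (hIind.const_mul _),
          integral_const, integral_const_mul, integral_indicator_const (1:ℝ) hC]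
        simp [measureReal_def, hABr i m m]
      rw [hval]
      have hb := bernoulli_mgf_bound (p m * p m) (2*t) (mul_nonneg (hp0 m) (hp0 m))
        (mul_le_one₀ (hp1 m) (hp0 m) (hp1 m))
      have harg : p m * p m * (2*t) + (2*t)^2/8 = 2 * (p m * p m) * t + t^2/2 := by ring
      rw [harg] at hb
      linarith [hb]
    · have hmA : MeasurableSet ({ω | W i ω = m} ∩ {ω | W (σ i) ω = ℓ}) :=
        (hsetmeas i m).inter (hsetmeas (σ i) ℓ)
      have hmB : MeasurableSet ({ω | W i ω = ℓ} ∩ {ω | W (σ i) ω = m}) :=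
        (hsetmeas i ℓ).inter (hsetmeas (σ i) m)
      have hptw : ∀ ω, Real.exp (t * Y i ω) = 1 + (Real.exp t - 1) *
          (Set.indicator ({ω | W i ω = m} ∩ {ω | W (σ i) ω = ℓ}) (fun _ => (1:ℝ)) ω +
           Set.indicator ({ω | W i ω = ℓ} ∩ {ω | W (σ i) ω = m}) (fun _ => (1:ℝ)) ω) := by
        intro ω
        by_cases h1 : W i ω = m <;> by_cases h2 : W (σ i) ω = ℓ <;>
          by_cases h3 : W (σ i) ω = m <;> by_cases h4 : W i ω = ℓ <;>
          first
          | exact absurd (h1.symm.trans h4) hml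
          | exact absurd (h3.symm.trans h2) hml
          | (have hYv : Y i ω = 1 := by simp [hYdef, h1, h2, h3, h4, hml, Ne.symm hml]
             have hmA2 : ω ∈ ({ω | W i ω = m} ∩ {ω | W (σ i) ω = ℓ}) := ⟨h1, h2⟩
             have hnB : ω ∉ ({ω | W i ω = ℓ} ∩ {ω | W (σ i) ω = m}) := by
               simp only [Set.mem_inter_iff, Set.mem_setOf_eq]; tauto
             rw [hYv, Set.indicator_of_mem hmA2, Set.indicator_of_notMem hnB, mul_one]
             ring)
          | (have hYv : Y i ω = 1 := by simp [hYdef, h1, h2, h3, h4, hml, Ne.symm hml]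
             have hmB2 : ω ∈ ({ω | W i ω = ℓ} ∩ {ω | W (σ i) ω = m}) := ⟨h4, h3⟩
             have hnA : ω ∉ ({ω | W i ω = m} ∩ {ω | W (σ i) ω = ℓ}) := by
               simp only [Set.mem_inter_iff, Set.mem_setOf_eq]; tauto
             rw [hYv, Set.indicator_of_notMem hnA, Set.indicator_of_mem hmB2, mul_one]
             ring)
          | (have hYv : Y i ω = 0 := by simp [hYdef, h1, h2, h3, h4, hml, Ne.symm hml]
             have hnA : ω ∉ ({ω | W i ω = m} ∩ {ω | W (σ i) ω = ℓ}) := by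
               simp only [Set.mem_inter_iff, Set.mem_setOf_eq]; tauto
             have hnB : ω ∉ ({ω | W i ω = ℓ} ∩ {ω | W (σ i) ω = m}) := by
               simp only [Set.mem_inter_iff, Set.mem_setOf_eq]; tauto
             rw [hYv, Set.indicator_of_notMem hnA, Set.indicator_of_notMem hnB,
               mul_zero, Real.exp_zero]
             ring)
      have hI1 : Integrable
          (Set.indicator ({ω | W i ω = m} ∩ {ω | W (σ i) ω = ℓ}) (fun _ => (1:ℝ))) μ :=
        (integrable_const (1:ℝ)).indicator hmA
      have hI2 : Integrable
          (Set.indicator ({ω | W i ω = ℓ} ∩ {ω | W (σ i) ω = m}) (fun _ => (1:ℝ))) μ :=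
        (integrable_const (1:ℝ)).indicator hmB
      have hval : ∫ ω, Real.exp (t * Y i ω) ∂μ
          = 1 + (Real.exp t - 1) * (2 * (p m * p ℓ)) := by
        have hI3 : Integrable (fun ω =>
            (Set.indicator ({ω | W i ω = m} ∩ {ω | W (σ i) ω = ℓ}) (fun _ => (1:ℝ)) ω +
             Set.indicator ({ω | W i ω = ℓ} ∩ {ω | W (σ i) ω = m}) (fun _ => (1:ℝ)) ω)) μ := by
          exact hI1.add hI2
        rw [integral_congr_ae (ae_of_all _ hptw),
          integral_add (integrable_const 1) (hI3.const_mul _),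
          integral_const, integral_const_mul, integral_add hI1 hI2,
          integral_indicator_const (1:ℝ) hmA, integral_indicator_const (1:ℝ) hmB]
        have r1 := hABr i m ℓ
        have r2 := hABr i ℓ m
        simp only [measureReal_def, r1, r2, smul_eq_mul, mul_one, measure_univ, ENNReal.toReal_one]
        ring
      have hq2 : 2 * (p m * p ℓ) ≤ 1 := by
        have hsum2 : p m + p ℓ ≤ 1 := by
          have h := Finset.sum_le_sum_of_subset_of_nonneg
            (Finset.subset_univ ({m, ℓ} : Finset (Fin K))) (fun k _ _ => hp0 k)
          rwa [Finset.sum_pair hml, hpsum] at h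
        nlinarith [hp0 m, hp0 ℓ, sq_nonneg (p m - p ℓ), sq_nonneg (p m + p ℓ)]
      rw [hval]
      have hb := bernoulli_mgf_bound (2 * (p m * p ℓ)) t (by positivity) hq2
      have hb2 : Real.exp (2 * (p m * p ℓ) * t + t^2/8) ≤
          Real.exp (2 * (p m * p ℓ) * t + t^2/2) := by
        apply Real.exp_le_exp.mpr; nlinarith [sq_nonneg t]
      linarith [hb, hb2]
  -- mgf bound for the full sum
  have hS : ∀ (t : ℝ), ∫ ω, Real.exp (t * ∑ i ∈ R, Y i ω) ∂μ ≤
      Real.exp ((N:ℝ) * (p m * p ℓ) * t + (N:ℝ) * t^2 / 4) := by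
    intro t
    have h1 : (fun ω => Real.exp (t * ∑ i ∈ R, Y i ω)) =
        fun ω => ∏ i ∈ R, Real.exp (t * Y i ω) := by
      funext ω; rw [Finset.mul_sum, Real.exp_sum]
    calc ∫ ω, Real.exp (t * ∑ i ∈ R, Y i ω) ∂μ
        = ∏ i ∈ R, ∫ ω, Real.exp (t * Y i ω) ∂μ := by
          rw [show (fun ω => Real.exp (t * ∑ i ∈ R, Y i ω)) =
            fun ω => ∏ i ∈ R, Real.exp (t * Y i ω) from h1]
          exact hprod t R (fun i hi => (hmemR i).mp hi)
      _ ≤ ∏ _i ∈ R, Real.exp (2 * (p m * p ℓ) * t + t^2/2) :=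
          Finset.prod_le_prod (fun i _ => integral_nonneg (fun ω => (Real.exp_pos _).le))
            (fun i _ => hpairexp t i)
      _ = Real.exp ((R.card : ℝ) * (2 * (p m * p ℓ) * t + t^2/2)) := by
          rw [Finset.prod_const, ← Real.exp_nat_mul]
      _ = Real.exp ((N:ℝ) * (p m * p ℓ) * t + (N:ℝ) * t^2 / 4) := by
          congr 1
          have hc : (R.card : ℝ) + (R.card : ℝ) = (N : ℝ) := by exact_mod_cast hcard
          linear_combination (p m * p ℓ * t + t^2/4) * hc
  -- Chernoff bounds
  have hup : (μ {ω | (N:ℝ) * (p m * p ℓ + ε) ≤ ∑ i ∈ R, Y i ω}).toReal ≤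
      Real.exp (-(N:ℝ) * ε^2) := by
    have h := measure_ge_le_exp_mul_mgf (μ := μ) (X := fun ω => ∑ i ∈ R, Y i ω)
      ((N:ℝ) * (p m * p ℓ + ε)) (t := 2*ε) (by linarith) (hint (2*ε) R)
    refine h.trans ?_
    have hm := hS (2*ε)
    calc Real.exp (-(2*ε) * ((N:ℝ) * (p m * p ℓ + ε))) *
          mgf (fun ω => ∑ i ∈ R, Y i ω) μ (2*ε)
        ≤ Real.exp (-(2*ε) * ((N:ℝ) * (p m * p ℓ + ε))) *
          Real.exp ((N:ℝ) * (p m * p ℓ) * (2*ε) + (N:ℝ) * (2*ε)^2 / 4) :=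
          mul_le_mul_of_nonneg_left hm (Real.exp_pos _).le
      _ = Real.exp (-(N:ℝ) * ε^2) := by rw [← Real.exp_add]; congr 1; ring
  have hdown : (μ {ω | (∑ i ∈ R, Y i ω) ≤ (N:ℝ) * (p m * p ℓ - ε)}).toReal ≤
      Real.exp (-(N:ℝ) * ε^2) := by
    have h := measure_le_le_exp_mul_mgf (μ := μ) (X := fun ω => ∑ i ∈ R, Y i ω)
      ((N:ℝ) * (p m * p ℓ - ε)) (t := -(2*ε)) (by linarith) (hint (-(2*ε)) R)
    refine h.trans ?_
    have hm := hS (-(2*ε))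
    calc Real.exp (-(-(2*ε)) * ((N:ℝ) * (p m * p ℓ - ε))) *
          mgf (fun ω => ∑ i ∈ R, Y i ω) μ (-(2*ε))
        ≤ Real.exp (-(-(2*ε)) * ((N:ℝ) * (p m * p ℓ - ε))) *
          Real.exp ((N:ℝ) * (p m * p ℓ) * (-(2*ε)) + (N:ℝ) * (-(2*ε))^2 / 4) :=
          mul_le_mul_of_nonneg_left hm (Real.exp_pos _).le
      _ = Real.exp (-(N:ℝ) * ε^2) := by rw [← Real.exp_add]; congr 1; ring
  -- event inclusion and conclusion
  have hsub : {ω | ε < |(1 / (N:ℝ)) * ∑ i : Fin N,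
        (if W i ω = m then (1:ℝ) else 0) * (if W (σ i) ω = ℓ then (1:ℝ) else 0)
        - p m * p ℓ|} ⊆
      {ω | (N:ℝ) * (p m * p ℓ + ε) ≤ ∑ i ∈ R, Y i ω} ∪
      {ω | (∑ i ∈ R, Y i ω) ≤ (N:ℝ) * (p m * p ℓ - ε)} := by
    intro ω hω
    simp only [Set.mem_setOf_eq] at hω
    rw [hsumid ω] at hω
    rcases lt_abs.mp hω with h | h
    · left
      simp only [Set.mem_setOf_eq]
      have h' : (N:ℝ) * (p m * p ℓ + ε) < (N:ℝ) * ((1/(N:ℝ)) * ∑ i ∈ R, Y i ω) :=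
        mul_lt_mul_of_pos_left (by linarith) hNpos
      have h'' : (N:ℝ) * ((1/(N:ℝ)) * ∑ i ∈ R, Y i ω) = ∑ i ∈ R, Y i ω := by
        field_simp
      rw [h''] at h'
      linarith
    · right
      simp only [Set.mem_setOf_eq]
      have h' : (N:ℝ) * ((1/(N:ℝ)) * ∑ i ∈ R, Y i ω) < (N:ℝ) * (p m * p ℓ - ε) :=
        mul_lt_mul_of_pos_left (by linarith) hNpos
      have h'' : (N:ℝ) * ((1/(N:ℝ)) * ∑ i ∈ R, Y i ω) = ∑ i ∈ R, Y i ω := by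
        field_simp
      rw [h''] at h'
      linarith
  calc μ {ω | ε < |(1 / (N:ℝ)) * ∑ i : Fin N,
        (if W i ω = m then (1:ℝ) else 0) * (if W (σ i) ω = ℓ then (1:ℝ) else 0)
        - p m * p ℓ|}
      ≤ μ ({ω | (N:ℝ) * (p m * p ℓ + ε) ≤ ∑ i ∈ R, Y i ω} ∪
          {ω | (∑ i ∈ R, Y i ω) ≤ (N:ℝ) * (p m * p ℓ - ε)}) := measure_mono hsub
    _ ≤ μ {ω | (N:ℝ) * (p m * p ℓ + ε) ≤ ∑ i ∈ R, Y i ω} +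
        μ {ω | (∑ i ∈ R, Y i ω) ≤ (N:ℝ) * (p m * p ℓ - ε)} := measure_union_le _ _
    _ ≤ ENNReal.ofReal (Real.exp (-(N:ℝ) * ε^2)) +
        ENNReal.ofReal (Real.exp (-(N:ℝ) * ε^2)) :=
        add_le_add
          ((ENNReal.le_ofReal_iff_toReal_le (measure_ne_top μ _) (Real.exp_pos _).le).mpr hup)
          ((ENNReal.le_ofReal_iff_toReal_le (measure_ne_top μ _) (Real.exp_pos _).le).mpr hdown)
    _ = ENNReal.ofReal (2 * Real.exp (-(N:ℝ) * ε^2)) := by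
        rw [← ENNReal.ofReal_add (Real.exp_pos _).le (Real.exp_pos _).le]
        congr 1
        ring
end

section
/- Let N, d, K be positive integers, let σ_1, …, σ_d : Fin N → Fin N be fixed-point-free involutions (permutations with σ_t ∘ σ_t = id and σ_t i ≠ i for all i), let p : Fin K → [0,1] be a probability vector (∑_k p_k = 1), and let (W_i)_{i∈Fin N} be i.i.d. Fin K-valued random variables with P(W_i = k) = p_k for all i and k. Then for every m, ℓ ∈ Fin K and every ε > 0: P( | (1/N) ∑_{t=1}^d ∑_{i∈Fin N} 1{W_i = m}·1{W_{σ_t i} = ℓ} − d·p_m p_ℓ | > ε ) ≤ 2d·exp(−N ε²/d²). In particular, the bound decays exponentially in N at a rate depending only on ε and d, uniformly over the probability vector p. -/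
open MeasureTheory ProbabilityTheory

section Aux

open Real Finset

private lemma hoeffding_key (r : ℝ) (h0 : 0 ≤ r) (h1 : r ≤ 1) (u : ℝ) :
    1 - r + r * Real.exp u ≤ Real.exp (r * u + u ^ 2 / 8) := by
  obtain ⟨G, hG⟩ : ∃ G : ℝ → ℝ, G = fun x => 1 - r + r * Real.exp x := ⟨_, rfl⟩
  have hGpos : ∀ x, 0 < G x := by
    intro x
    have := Real.exp_pos x
    rcases eq_or_lt_of_le h0 with h | h
    · simp [hG, ← h]
    · have : 0 < r * Real.exp x := by positivity
      simp only [hG]; linarith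
  obtain ⟨φ, hφdef⟩ : ∃ φ : ℝ → ℝ, φ = fun x => Real.log (G x) - r * x - x ^ 2 / 8 := ⟨_, rfl⟩
  obtain ⟨φ', hφ'def⟩ : ∃ φ' : ℝ → ℝ, φ' = fun x => r * Real.exp x / G x - r - x / 4 := ⟨_, rfl⟩
  have hGd : ∀ x, HasDerivAt G (r * Real.exp x) x := by
    intro x
    rw [hG]
    simpa using ((Real.hasDerivAt_exp x).const_mul r).const_add (1 - r)
  have hφd : ∀ x, HasDerivAt φ (φ' x) x := by
    intro x
    have h1' : HasDerivAt (fun y => Real.log (G y)) (r * Real.exp x / G x) x :=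
      (hGd x).log (hGpos x).ne'
    have h2' : HasDerivAt (fun y : ℝ => r * y) r x := by
      simpa using (hasDerivAt_id x).const_mul r
    have h3' : HasDerivAt (fun y : ℝ => y ^ 2 / 8) (x / 4) x := by
      have := (hasDerivAt_pow 2 x).div_const 8
      convert this using 1
      · rfl
      · rfl
      · norm_num; ring
    rw [hφdef, hφ'def]
    exact (h1'.sub h2').sub h3'
  have hφ'd : ∀ x, HasDerivAt φ'
      ((r * Real.exp x * G x - r * Real.exp x * (r * Real.exp x)) / (G x) ^ 2 - 1 / 4) x := by
    intro x
    have hnum : HasDerivAt (fun y => r * Real.exp y) (r * Real.exp x) x :=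
      (Real.hasDerivAt_exp x).const_mul r
    have hdiv : HasDerivAt (fun y => r * Real.exp y / G y)
        ((r * Real.exp x * G x - r * Real.exp x * (r * Real.exp x)) / (G x) ^ 2) x :=
      hnum.div (hGd x) (hGpos x).ne'
    have h4' : HasDerivAt (fun y : ℝ => y / 4) (1 / 4 : ℝ) x := by
      simpa using (hasDerivAt_id x).div_const 4
    rw [hφ'def]
    exact (hdiv.sub_const r).sub h4'
  have hψ : ∀ x, (r * Real.exp x * G x - r * Real.exp x * (r * Real.exp x)) / (G x) ^ 2
      - 1 / 4 ≤ 0 := by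
    intro x
    have hg := hGpos x
    have hag : r * Real.exp x ≤ G x := by simp only [hG]; linarith
    have ha0 : 0 ≤ r * Real.exp x := by positivity
    have h2 : (r * Real.exp x * G x - r * Real.exp x * (r * Real.exp x)) / (G x) ^ 2 ≤ 1 / 4 := by
      rw [div_le_iff₀ (by positivity)]
      nlinarith [sq_nonneg (G x - 2 * (r * Real.exp x))]
    linarith
  have hanti : Antitone φ' := by
    refine antitone_of_deriv_nonpos (fun x => (hφ'd x).differentiableAt) (fun x => ?_)
    rw [(hφ'd x).deriv]
    exact hψ x
  have hφ'0 : φ' 0 = 0 := by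
    simp only [hφ'def, hG, Real.exp_zero, mul_one]
    have : 1 - r + r * 1 = 1 := by ring
    field_simp
    ring
  have hφ0 : φ 0 = 0 := by
    have : G 0 = 1 := by simp [hG]
    simp [hφdef, this]
  have hmain : ∀ x, φ x ≤ 0 := by
    intro x
    rcases le_total 0 x with hx | hx
    · have : AntitoneOn φ (Set.Ici 0) := by
        refine antitoneOn_of_deriv_nonpos (convex_Ici 0)
          (fun y _ => ((hφd y).differentiableAt).continuousAt.continuousWithinAt)
          (fun y _ => ((hφd y).differentiableAt).differentiableWithinAt) (fun y hy => ?_)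
        rw [(hφd y).deriv]
        have : φ' y ≤ φ' 0 := hanti (le_of_lt (by simpa using hy))
        rw [hφ'0] at this; exact this
      have := this (Set.self_mem_Ici) (Set.mem_Ici.mpr hx) hx
      linarith
    · have : MonotoneOn φ (Set.Iic 0) := by
        refine monotoneOn_of_deriv_nonneg (convex_Iic 0)
          (fun y _ => ((hφd y).differentiableAt).continuousAt.continuousWithinAt)
          (fun y _ => ((hφd y).differentiableAt).differentiableWithinAt) (fun y hy => ?_)
        rw [(hφd y).deriv]
        have : φ' 0 ≤ φ' y := hanti (le_of_lt (by simpa using hy))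
        rw [hφ'0] at this; exact this
      have := this (Set.mem_Iic.mpr hx) (Set.self_mem_Iic) hx
      linarith
  have hlog : Real.log (G u) ≤ r * u + u ^ 2 / 8 := by
    have := hmain u
    simp only [hφdef] at this
    linarith
  rw [show (1 : ℝ) - r + r * Real.exp u = G u by rw [hG]]
  calc G u = Real.exp (Real.log (G u)) := (Real.exp_log (hGpos u)).symm
    _ ≤ Real.exp (r * u + u ^ 2 / 8) := Real.exp_le_exp.mpr hlog

private lemma mgf_le_of_Icc {Ω : Type*} [MeasurableSpace Ω] (μ : Measure Ω) [IsProbabilityMeasure μ]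
    (Y : Ω → ℝ) (hY : Measurable Y) (h0 : ∀ ω, 0 ≤ Y ω) (h2 : ∀ ω, Y ω ≤ 2) (t : ℝ) :
    mgf Y μ t ≤ Real.exp (t * (∫ ω, Y ω ∂μ) + t ^ 2 / 2) := by
  have hYint : Integrable Y μ := by
    refine Integrable.mono' (integrable_const 2) hY.aestronglyMeasurable ?_
    filter_upwards with ω
    rw [Real.norm_eq_abs, abs_le]
    exact ⟨by linarith [h0 ω], h2 ω⟩
  have hEY0 : 0 ≤ ∫ ω, Y ω ∂μ := integral_nonneg h0
  have hEY2 : ∫ ω, Y ω ∂μ ≤ 2 := by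
    calc ∫ ω, Y ω ∂μ ≤ ∫ _, (2 : ℝ) ∂μ := integral_mono hYint (integrable_const 2) h2
      _ = 2 := by simp
  have hpt : ∀ ω, Real.exp (t * Y ω) ≤ 1 - Y ω / 2 + Y ω / 2 * Real.exp (2 * t) := by
    intro ω
    have hc := convexOn_exp.2 (Set.mem_univ (0 : ℝ)) (Set.mem_univ (2 * t))
      (show (0:ℝ) ≤ 1 - Y ω / 2 by linarith [h2 ω]) (show (0:ℝ) ≤ Y ω / 2 by linarith [h0 ω])
      (show (1 - Y ω / 2) + Y ω / 2 = 1 by ring)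
    simp only [smul_eq_mul, mul_zero, zero_add, Real.exp_zero, mul_one] at hc
    calc Real.exp (t * Y ω) = Real.exp (Y ω / 2 * (2 * t)) := by ring_nf
      _ ≤ (1 - Y ω / 2) * 1 + Y ω / 2 * Real.exp (2 * t) := by simpa using hc
      _ = 1 - Y ω / 2 + Y ω / 2 * Real.exp (2 * t) := by ring
  have hint : Integrable (fun ω => Real.exp (t * Y ω)) μ := by
    refine Integrable.mono' (integrable_const (Real.exp (2 * |t|)))
      ((hY.const_mul t).exp).aestronglyMeasurable ?_
    filter_upwards with ω
    rw [Real.norm_eq_abs, abs_of_pos (Real.exp_pos _), Real.exp_le_exp]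
    calc t * Y ω ≤ |t * Y ω| := le_abs_self _
      _ = |t| * |Y ω| := abs_mul _ _
      _ ≤ |t| * 2 := by
          refine mul_le_mul_of_nonneg_left ?_ (abs_nonneg t)
          rw [abs_le]; exact ⟨by linarith [h0 ω], h2 ω⟩
      _ = 2 * |t| := by ring
  have hbd : mgf Y μ t ≤ 1 - (∫ ω, Y ω ∂μ) / 2 + (∫ ω, Y ω ∂μ) / 2 * Real.exp (2 * t) := by
    have hrint : Integrable (fun ω => 1 - Y ω / 2 + Y ω / 2 * Real.exp (2 * t)) μ := by
      apply Integrable.add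
      · exact (integrable_const 1).sub (hYint.div_const 2)
      · exact (hYint.div_const 2).mul_const _
    calc mgf Y μ t = ∫ ω, Real.exp (t * Y ω) ∂μ := rfl
      _ ≤ ∫ ω, (1 - Y ω / 2 + Y ω / 2 * Real.exp (2 * t)) ∂μ :=
          integral_mono hint hrint hpt
      _ = 1 - (∫ ω, Y ω ∂μ) / 2 + (∫ ω, Y ω ∂μ) / 2 * Real.exp (2 * t) := by
          have e1 : ∀ ω, 1 - Y ω / 2 + Y ω / 2 * Real.exp (2 * t)
              = 1 + Y ω * ((Real.exp (2 * t) - 1) / 2) := fun ω => by ring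
          simp_rw [e1]
          rw [integral_add (integrable_const 1) (hYint.mul_const _), integral_mul_const]
          simp only [integral_const, probReal_univ, ENNReal.toReal_one, smul_eq_mul, one_mul]
          ring
  have hkey := hoeffding_key ((∫ ω, Y ω ∂μ) / 2) (by linarith) (by linarith) (2 * t)
  calc mgf Y μ t ≤ 1 - (∫ ω, Y ω ∂μ) / 2 + (∫ ω, Y ω ∂μ) / 2 * Real.exp (2 * t) := hbd
    _ ≤ Real.exp ((∫ ω, Y ω ∂μ) / 2 * (2 * t) + (2 * t) ^ 2 / 8) := hkey
    _ = Real.exp (t * (∫ ω, Y ω ∂μ) + t ^ 2 / 2) := by ring_nf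

private lemma exp_ind_prod {Ω : Type*} [MeasurableSpace Ω] (μ : Measure Ω) [IsProbabilityMeasure μ]
    {N K : ℕ} (p : Fin K → ℝ) (hp0 : ∀ k, 0 ≤ p k)
    (W : Fin N → Ω → Fin K) (hWmeas : ∀ i, Measurable (W i))
    (hindep : iIndepFun W μ)
    (hlaw : ∀ i k, μ {ω | W i ω = k} = ENNReal.ofReal (p k))
    (i j : Fin N) (hij : i ≠ j) (m ℓ : Fin K) :
    ∫ ω, (if W i ω = m then (1 : ℝ) else 0) * (if W j ω = ℓ then (1 : ℝ) else 0) ∂μ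
      = p m * p ℓ := by
  have hfun : (fun ω => (if W i ω = m then (1 : ℝ) else 0) * (if W j ω = ℓ then (1 : ℝ) else 0))
      = (W i ⁻¹' {m} ∩ W j ⁻¹' {ℓ}).indicator (fun _ => (1 : ℝ)) := by
    ext ω
    by_cases h1 : W i ω = m <;> by_cases h2 : W j ω = ℓ <;>
      simp [Set.indicator_apply, h1, h2]
  have hmeas : MeasurableSet (W i ⁻¹' {m} ∩ W j ⁻¹' {ℓ}) :=
    ((hWmeas i) (measurableSet_singleton m)).inter ((hWmeas j) (measurableSet_singleton ℓ))
  rw [hfun, integral_indicator_const _ hmeas]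
  have hI : IndepFun (W i) (W j) μ := hindep.indepFun hij
  have := hI.measure_inter_preimage_eq_mul {m} {ℓ} (measurableSet_singleton m)
    (measurableSet_singleton ℓ)
  have hA : W i ⁻¹' {m} = {ω | W i ω = m} := rfl
  have hB : W j ⁻¹' {ℓ} = {ω | W j ω = ℓ} := rfl
  rw [measureReal_def, this, hA, hB, hlaw i m, hlaw j ℓ, ← ENNReal.ofReal_mul (hp0 m)]
  simp [ENNReal.toReal_ofReal (mul_nonneg (hp0 m) (hp0 ℓ))]

private lemma matching_bound {Ω : Type*} [MeasurableSpace Ω] (μ : Measure Ω) [IsProbabilityMeasure μ]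
    {N K : ℕ} (hN : 0 < N) (σ : Fin N → Fin N)
    (hinv : ∀ i, σ (σ i) = i) (hnf : ∀ i, σ i ≠ i)
    (p : Fin K → ℝ) (hp0 : ∀ k, 0 ≤ p k) (hp1 : ∀ k, p k ≤ 1)
    (W : Fin N → Ω → Fin K) (hWmeas : ∀ i, Measurable (W i))
    (hindep : iIndepFun W μ)
    (hlaw : ∀ i k, μ {ω | W i ω = k} = ENNReal.ofReal (p k))
    (m ℓ : Fin K) (s : ℝ) (hs : 0 < s) :
    μ {ω | s ≤ |∑ i : Fin N, (if W i ω = m then (1 : ℝ) else 0) *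
        (if W (σ i) ω = ℓ then (1 : ℝ) else 0) - (N : ℝ) * (p m * p ℓ)|} ≤
      ENNReal.ofReal (2 * Real.exp (-s ^ 2 / N)) := by
  classical
  have hσinj : Function.Injective σ := fun a b h => by rw [← hinv a, h, hinv]
  set R : Finset (Fin N) := Finset.univ.filter (fun i : Fin N => i < σ i) with hR
  -- cardinality
  have hRc : Rᶜ = R.image σ := by
    ext j
    simp only [Finset.mem_compl, hR, Finset.mem_filter, Finset.mem_univ, true_and,
      Finset.mem_image, not_lt]
    constructor
    · intro h
      have hlt : σ j < j := lt_of_le_of_ne h (hnf j)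
      exact ⟨σ j, by rw [hinv]; exact hlt, hinv j⟩
    · rintro ⟨i, hi, rfl⟩
      rw [hinv]
      exact le_of_lt hi
  have hcard : N = 2 * R.card := by
    have h1 : R.card + Rᶜ.card = N := by
      rw [Finset.card_add_card_compl]; simp
    have h2 : Rᶜ.card = R.card := by
      rw [hRc, Finset.card_image_of_injective _ hσinj]
    omega
  have hncard : 0 < R.card := by
    by_contra h
    push_neg at h
    interval_cases h' : R.card <;> omega
  -- sum splitting
  have hsplit : ∀ f : Fin N → ℝ, ∑ i : Fin N, f i = ∑ i ∈ R, (f i + f (σ i)) := by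
    intro f
    have h1 : ∑ i : Fin N, f i = ∑ i ∈ R, f i + ∑ i ∈ Rᶜ, f i := by
      rw [Finset.sum_add_sum_compl]
    have h2 : ∑ i ∈ Rᶜ, f i = ∑ i ∈ R, f (σ i) := by
      rw [hRc, Finset.sum_image (fun a _ b _ h => hσinj h)]
    rw [h1, h2, ← Finset.sum_add_distrib]
  -- pair variables
  obtain ⟨Y, hYdef⟩ : ∃ Y : Fin N → Ω → ℝ, Y = fun i ω =>
      (if W i ω = m then (1 : ℝ) else 0) * (if W (σ i) ω = ℓ then (1 : ℝ) else 0) +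
      (if W (σ i) ω = m then (1 : ℝ) else 0) * (if W i ω = ℓ then (1 : ℝ) else 0) :=
    ⟨_, rfl⟩
  have hsum : ∀ ω, ∑ i : Fin N, (if W i ω = m then (1 : ℝ) else 0) *
      (if W (σ i) ω = ℓ then (1 : ℝ) else 0) = ∑ i ∈ R, Y i ω := by
    intro ω
    rw [hsplit (fun i => (if W i ω = m then (1 : ℝ) else 0) *
      (if W (σ i) ω = ℓ then (1 : ℝ) else 0))]
    refine Finset.sum_congr rfl (fun i _ => ?_)
    simp only [hYdef, hinv i]
  have hYmeas : ∀ i, Measurable (Y i) := by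
    intro i
    simp only [hYdef]
    refine Measurable.add (Measurable.mul ?_ ?_) (Measurable.mul ?_ ?_) <;>
      exact (measurable_of_finite (fun k : Fin K => if k = _ then (1:ℝ) else 0)).comp
        (hWmeas _)
  have hY0 : ∀ i ω, 0 ≤ Y i ω := by
    intro i ω
    simp only [hYdef]
    positivity
  have hY2 : ∀ i ω, Y i ω ≤ 2 := by
    intro i ω
    simp only [hYdef]
    have h1 : (if W i ω = m then (1:ℝ) else 0) ≤ 1 := by split <;> norm_num
    have h2 : (if W (σ i) ω = ℓ then (1:ℝ) else 0) ≤ 1 := by split <;> norm_num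
    have h3 : (if W (σ i) ω = m then (1:ℝ) else 0) ≤ 1 := by split <;> norm_num
    have h4 : (if W i ω = ℓ then (1:ℝ) else 0) ≤ 1 := by split <;> norm_num
    have h5 : (0:ℝ) ≤ (if W i ω = m then (1:ℝ) else 0) := by positivity
    have h6 : (0:ℝ) ≤ (if W (σ i) ω = ℓ then (1:ℝ) else 0) := by positivity
    have h7 : (0:ℝ) ≤ (if W (σ i) ω = m then (1:ℝ) else 0) := by positivity
    have h8 : (0:ℝ) ≤ (if W i ω = ℓ then (1:ℝ) else 0) := by positivity
    nlinarith
  have hEY : ∀ i, i ∈ R → ∫ ω, Y i ω ∂μ = 2 * (p m * p ℓ) := by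
    intro i hi
    have hne : i ≠ σ i := fun h => hnf i h.symm
    have hint1 : Integrable (fun ω => (if W i ω = m then (1 : ℝ) else 0) *
        (if W (σ i) ω = ℓ then (1 : ℝ) else 0)) μ := by
      refine Integrable.mono' (integrable_const 1) ?_ ?_
      · exact (Measurable.mul
          ((measurable_of_finite (fun k : Fin K => if k = m then (1:ℝ) else 0)).comp (hWmeas i))
          ((measurable_of_finite (fun k : Fin K => if k = ℓ then (1:ℝ) else 0)).comp
            (hWmeas (σ i)))).aestronglyMeasurable
      · filter_upwards with ω
        rw [Real.norm_eq_abs]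
        by_cases hA : W i ω = m <;> by_cases hB : W (σ i) ω = ℓ <;> simp [hA, hB]
    have hint2 : Integrable (fun ω => (if W (σ i) ω = m then (1 : ℝ) else 0) *
        (if W i ω = ℓ then (1 : ℝ) else 0)) μ := by
      refine Integrable.mono' (integrable_const 1) ?_ ?_
      · exact (Measurable.mul
          ((measurable_of_finite (fun k : Fin K => if k = m then (1:ℝ) else 0)).comp
            (hWmeas (σ i)))
          ((measurable_of_finite (fun k : Fin K => if k = ℓ then (1:ℝ) else 0)).comp
            (hWmeas i))).aestronglyMeasurable
      · filter_upwards with ω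
        rw [Real.norm_eq_abs]
        by_cases hA : W (σ i) ω = m <;> by_cases hB : W i ω = ℓ <;> simp [hA, hB]
    have e1 := exp_ind_prod μ p hp0 W hWmeas hindep hlaw i (σ i) hne m ℓ
    have e2 := exp_ind_prod μ p hp0 W hWmeas hindep hlaw (σ i) i (Ne.symm hne) m ℓ
    simp only [hYdef]
    rw [integral_add hint1 hint2, e1, e2]
    ring
  -- independence / mgf factorization
  have hindepYsum : ∀ (s' : Finset (Fin N)), s' ⊆ R → ∀ a ∈ R, a ∉ s' →
      IndepFun (Y a) (fun ω => ∑ i ∈ s', Y i ω) μ := by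
    intro s' hsub a haR has'
    set S : Finset (Fin N) := {a, σ a} with hS
    set T : Finset (Fin N) := s'.biUnion (fun j => {j, σ j}) with hT
    have haS : a ∈ S := by simp [hS]
    have hσaS : σ a ∈ S := by simp [hS]
    have hmemT : ∀ j ∈ s', j ∈ T ∧ σ j ∈ T := by
      intro j hj
      constructor <;> exact Finset.mem_biUnion.mpr ⟨j, hj, by simp⟩
    have hdisj : Disjoint S T := by
      rw [Finset.disjoint_left]
      intro x hxS hxT
      obtain ⟨j, hj, hxj⟩ := Finset.mem_biUnion.mp hxT
      have hjR : j ∈ R := hsub hj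
      have haj : a ≠ j := fun h => has' (h ▸ hj)
      simp only [hS, Finset.mem_insert, Finset.mem_singleton] at hxS
      simp only [Finset.mem_insert, Finset.mem_singleton] at hxj
      have key : ∀ b c : Fin N, b ∈ R → c ∈ R → b ≠ σ c := by
        intro b c hb hc e
        have h1 : b < σ b := by rw [hR] at hb; simpa using hb
        have h2 : c < σ c := by rw [hR] at hc; simpa using hc
        rw [e, hinv] at h1
        exact absurd (h2.trans h1) (lt_irrefl _)
      rcases hxS with h' | h' <;> rcases hxj with h | h
      · exact haj (h'.symm.trans h)
      · exact key a j haR hjR (h'.symm.trans h)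
      · exact key j a hjR haR (h.symm.trans h')
      · exact haj (hσinj (h'.symm.trans h))
    have hbase := hindep.indepFun_finset S T hdisj hWmeas
    obtain ⟨F, hFdef⟩ : ∃ F : ((x : ↥S) → Fin K) → ℝ, F = fun v =>
        (if v ⟨a, haS⟩ = m then (1 : ℝ) else 0) * (if v ⟨σ a, hσaS⟩ = ℓ then (1 : ℝ) else 0) +
        (if v ⟨σ a, hσaS⟩ = m then (1 : ℝ) else 0) * (if v ⟨a, haS⟩ = ℓ then (1 : ℝ) else 0) :=
      ⟨_, rfl⟩
    obtain ⟨G, hGdef⟩ : ∃ G : ((x : ↥T) → Fin K) → ℝ, G = fun v =>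
        ∑ j ∈ s', (if hj : j ∈ T ∧ σ j ∈ T then
          (if v ⟨j, hj.1⟩ = m then (1 : ℝ) else 0) * (if v ⟨σ j, hj.2⟩ = ℓ then (1 : ℝ) else 0) +
          (if v ⟨σ j, hj.2⟩ = m then (1 : ℝ) else 0) * (if v ⟨j, hj.1⟩ = ℓ then (1 : ℝ) else 0)
          else 0) := ⟨_, rfl⟩
    have hF : Measurable F := measurable_of_finite F
    have hG : Measurable G := measurable_of_finite G
    have hcomp := hbase.comp hF hG
    have hYa : Y a = F ∘ (fun ω (x : ↥S) => W x ω) := by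
      funext ω
      simp only [hYdef, hFdef, Function.comp_apply]
    have hYsum : (fun ω => ∑ i ∈ s', Y i ω) = G ∘ (fun ω (x : ↥T) => W x ω) := by
      funext ω
      simp only [hGdef, Function.comp_apply]
      refine Finset.sum_congr rfl (fun j hj => ?_)
      rw [dif_pos (hmemT j hj)]
      simp only [hYdef]
    rw [hYa, hYsum]
    exact hcomp
  -- mgf factorization
  have hmgfprod : ∀ t : ℝ, ∀ s' : Finset (Fin N), s' ⊆ R →
      mgf (fun ω => ∑ i ∈ s', Y i ω) μ t = ∏ i ∈ s', mgf (Y i) μ t := by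
    intro t s'
    induction s' using Finset.induction_on with
    | empty =>
      intro _
      simp [mgf]
    | insert a s' has' ih =>
      intro hsub
      have haR : a ∈ R := hsub (Finset.mem_insert_self a s')
      have hsub' : s' ⊆ R := fun x hx => hsub (Finset.mem_insert_of_mem hx)
      have hI := hindepYsum s' hsub' a haR has'
      have heq : (fun ω => ∑ i ∈ insert a s', Y i ω)
          = Y a + (fun ω => ∑ i ∈ s', Y i ω) := by
        funext ω
        simp [Finset.sum_insert has']
      have hm1 : AEStronglyMeasurable (fun ω => Real.exp (t * Y a ω)) μ :=
        (((hYmeas a).const_mul t).exp).aestronglyMeasurable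
      have hm2 : AEStronglyMeasurable (fun ω => Real.exp (t * (∑ i ∈ s', Y i ω))) μ :=
        (((Finset.measurable_sum s' (fun i _ => hYmeas i)).const_mul t).exp).aestronglyMeasurable
      rw [heq, hI.mgf_add hm1 hm2, ih hsub', Finset.prod_insert has']
  -- mgf bound
  have hmgfle : ∀ t : ℝ, mgf (fun ω => ∑ i ∈ R, Y i ω) μ t ≤
      Real.exp (t * ((N : ℝ) * (p m * p ℓ)) + (R.card : ℝ) * t ^ 2 / 2) := by
    intro t
    rw [hmgfprod t R (Finset.Subset.refl R)]
    have hNr : (N : ℝ) = 2 * (R.card : ℝ) := by exact_mod_cast hcard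
    calc ∏ i ∈ R, mgf (Y i) μ t
        ≤ ∏ _i ∈ R, Real.exp (t * (2 * (p m * p ℓ)) + t ^ 2 / 2) := by
          refine Finset.prod_le_prod (fun i _ => mgf_nonneg) (fun i hi => ?_)
          have := mgf_le_of_Icc μ (Y i) (hYmeas i) (hY0 i) (hY2 i) t
          rwa [hEY i hi] at this
      _ = Real.exp ((R.card : ℝ) * (t * (2 * (p m * p ℓ)) + t ^ 2 / 2)) := by
          rw [Finset.prod_const, ← Real.exp_nat_mul]
      _ = Real.exp (t * ((N : ℝ) * (p m * p ℓ)) + (R.card : ℝ) * t ^ 2 / 2) := by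
          rw [hNr]; ring_nf
  -- Chernoff
  have hSmeas : Measurable (fun ω => ∑ i ∈ R, Y i ω) :=
    Finset.measurable_sum R (fun i _ => hYmeas i)
  have hSnn : ∀ ω, 0 ≤ ∑ i ∈ R, Y i ω := fun ω =>
    Finset.sum_nonneg (fun i _ => hY0 i ω)
  have hSub : ∀ ω, ∑ i ∈ R, Y i ω ≤ 2 * (R.card : ℝ) := by
    intro ω
    calc ∑ i ∈ R, Y i ω ≤ ∑ _i ∈ R, (2 : ℝ) :=
          Finset.sum_le_sum (fun i _ => hY2 i ω)
      _ = 2 * (R.card : ℝ) := by rw [Finset.sum_const]; push_cast; ring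
  have hint : ∀ t : ℝ, Integrable (fun ω => Real.exp (t * (∑ i ∈ R, Y i ω))) μ := by
    intro t
    refine Integrable.mono' (integrable_const (Real.exp (|t| * (2 * (R.card : ℝ)))))
      ((hSmeas.const_mul t).exp).aestronglyMeasurable ?_
    filter_upwards with ω
    rw [Real.norm_eq_abs, abs_of_pos (Real.exp_pos _), Real.exp_le_exp]
    rcases le_total 0 t with ht | ht
    · calc t * (∑ i ∈ R, Y i ω) ≤ t * (2 * (R.card : ℝ)) :=
            mul_le_mul_of_nonneg_left (hSub ω) ht
        _ ≤ |t| * (2 * (R.card : ℝ)) := by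
            refine mul_le_mul_of_nonneg_right (le_abs_self t) ?_
            positivity
    · have h1 : t * (∑ i ∈ R, Y i ω) ≤ 0 :=
        mul_nonpos_of_nonpos_of_nonneg ht (hSnn ω)
      have h2 : (0:ℝ) ≤ |t| * (2 * (R.card : ℝ)) := by positivity
      linarith
  set M : ℝ := (N : ℝ) * (p m * p ℓ) with hM
  have hnpos : (0:ℝ) < (R.card : ℝ) := by exact_mod_cast hncard
  have hexpeq : -s ^ 2 / (N : ℝ) = -(s / (R.card : ℝ)) * s +
      (R.card : ℝ) * (s / (R.card : ℝ)) ^ 2 / 2 := by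
    have hNr : (N : ℝ) = 2 * (R.card : ℝ) := by exact_mod_cast hcard
    rw [hNr]
    field_simp
    ring
  have hup : (μ {ω | M + s ≤ ∑ i ∈ R, Y i ω}).toReal ≤ Real.exp (-s ^ 2 / (N : ℝ)) := by
    set t0 : ℝ := s / (R.card : ℝ) with ht0
    have ht0pos : 0 ≤ t0 := by positivity
    calc (μ {ω | M + s ≤ ∑ i ∈ R, Y i ω}).toReal
        ≤ Real.exp (-t0 * (M + s)) * mgf (fun ω => ∑ i ∈ R, Y i ω) μ t0 :=
          measure_ge_le_exp_mul_mgf (M + s) ht0pos (hint t0)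
      _ ≤ Real.exp (-t0 * (M + s)) *
          Real.exp (t0 * M + (R.card : ℝ) * t0 ^ 2 / 2) := by
          exact mul_le_mul_of_nonneg_left (hmgfle t0) (Real.exp_pos _).le
      _ = Real.exp (-t0 * (M + s) + (t0 * M + (R.card : ℝ) * t0 ^ 2 / 2)) := by
          rw [← Real.exp_add]
      _ = Real.exp (-t0 * s + (R.card : ℝ) * t0 ^ 2 / 2) := by ring_nf
      _ = Real.exp (-s ^ 2 / (N : ℝ)) := by rw [hexpeq]
  have hlo : (μ {ω | ∑ i ∈ R, Y i ω ≤ M - s}).toReal ≤ Real.exp (-s ^ 2 / (N : ℝ)) := by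
    set t1 : ℝ := -(s / (R.card : ℝ)) with ht1
    have ht1neg : t1 ≤ 0 := by
      rw [ht1]
      simp only [neg_nonpos]
      positivity
    calc (μ {ω | ∑ i ∈ R, Y i ω ≤ M - s}).toReal
        ≤ Real.exp (-t1 * (M - s)) * mgf (fun ω => ∑ i ∈ R, Y i ω) μ t1 :=
          measure_le_le_exp_mul_mgf (M - s) ht1neg (hint t1)
      _ ≤ Real.exp (-t1 * (M - s)) *
          Real.exp (t1 * M + (R.card : ℝ) * t1 ^ 2 / 2) := by
          exact mul_le_mul_of_nonneg_left (hmgfle t1) (Real.exp_pos _).le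
      _ = Real.exp (-t1 * (M - s) + (t1 * M + (R.card : ℝ) * t1 ^ 2 / 2)) := by
          rw [← Real.exp_add]
      _ = Real.exp (-s ^ 2 / (N : ℝ)) := by
          rw [hexpeq, ht1]
          ring_nf
  -- event inclusion and conclusion
  have hincl : {ω | s ≤ |∑ i : Fin N, (if W i ω = m then (1 : ℝ) else 0) *
      (if W (σ i) ω = ℓ then (1 : ℝ) else 0) - (N : ℝ) * (p m * p ℓ)|} ⊆
      {ω | M + s ≤ ∑ i ∈ R, Y i ω} ∪ {ω | ∑ i ∈ R, Y i ω ≤ M - s} := by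
    intro ω hω
    simp only [Set.mem_setOf_eq] at hω
    rw [hsum ω] at hω
    rcases le_abs.mp hω with h | h
    · left
      simp only [Set.mem_setOf_eq, hM]
      linarith
    · right
      simp only [Set.mem_setOf_eq, hM]
      linarith
  calc μ {ω | s ≤ |∑ i : Fin N, (if W i ω = m then (1 : ℝ) else 0) *
        (if W (σ i) ω = ℓ then (1 : ℝ) else 0) - (N : ℝ) * (p m * p ℓ)|}
      ≤ μ ({ω | M + s ≤ ∑ i ∈ R, Y i ω} ∪ {ω | ∑ i ∈ R, Y i ω ≤ M - s}) :=
        measure_mono hincl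
    _ ≤ μ {ω | M + s ≤ ∑ i ∈ R, Y i ω} + μ {ω | ∑ i ∈ R, Y i ω ≤ M - s} :=
        measure_union_le _ _
    _ ≤ ENNReal.ofReal (Real.exp (-s ^ 2 / (N : ℝ)))
        + ENNReal.ofReal (Real.exp (-s ^ 2 / (N : ℝ))) := by
        gcongr
        · exact (ENNReal.le_ofReal_iff_toReal_le (measure_ne_top μ _)
            (Real.exp_pos _).le).mpr hup
        · exact (ENNReal.le_ofReal_iff_toReal_le (measure_ne_top μ _)
            (Real.exp_pos _).le).mpr hlo
    _ = ENNReal.ofReal (2 * Real.exp (-s ^ 2 / N)) := by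
        rw [← ENNReal.ofReal_add (Real.exp_pos _).le (Real.exp_pos _).le]
        ring_nf

end Aux

open Real Finset in
/-- Lemma 4.1 of the paper: if `σ 1, …, σ d` are fixed-point-free involutions
of `Fin N` (encoding `d` perfect matchings of a `d`-regular graph) and the
`(W i)_i` are i.i.d. `Fin K`-valued with law `p`, then the normalized quadratic
interaction count `(1/N) ∑ t, ∑ i, 1{W i = m} 1{W (σ t i) = ℓ}` concentrates at
`d * p m * p ℓ` with bound `2 d exp (-N ε² / d²)`, uniformly in `p`. -/
theorem regular_graph_matching_concentration
    {Ω : Type*} [MeasurableSpace Ω] (μ : Measure Ω) [IsProbabilityMeasure μ]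
    (N d K : ℕ) (hN : 0 < N) (hd : 0 < d) (hK : 0 < K)
    (σ : Fin d → Fin N → Fin N)
    (hσinv : ∀ t i, σ t (σ t i) = i) (hσnf : ∀ t i, σ t i ≠ i)
    (p : Fin K → ℝ) (hp0 : ∀ k, 0 ≤ p k) (hp1 : ∀ k, p k ≤ 1)
    (hpsum : ∑ k, p k = 1)
    (W : Fin N → Ω → Fin K) (hWmeas : ∀ i, Measurable (W i))
    -- the `W i` are independent and identically distributed with law `p`:
    (hindep : iIndepFun W μ)
    (hlaw : ∀ i k, μ {ω | W i ω = k} = ENNReal.ofReal (p k))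
    (m ℓ : Fin K) (ε : ℝ) (hε : 0 < ε) :
    μ {ω | ε <
        |(1 / (N : ℝ)) * ∑ t : Fin d, ∑ i : Fin N,
          (if W i ω = m then (1 : ℝ) else 0) *
            (if W (σ t i) ω = ℓ then (1 : ℝ) else 0) - (d : ℝ) * (p m * p ℓ)|} ≤
      ENNReal.ofReal (2 * (d : ℝ) * Real.exp (-(N : ℝ) * ε ^ 2 / (d : ℝ) ^ 2)) := by
  have hNpos : (0:ℝ) < N := by exact_mod_cast hN
  have hdpos : (0:ℝ) < d := by exact_mod_cast hd
  set s : ℝ := (N : ℝ) * ε / d with hsdef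
  have hs : 0 < s := by positivity
  set E : Fin d → Set Ω := fun t => {ω | s ≤ |∑ i : Fin N,
    (if W i ω = m then (1 : ℝ) else 0) * (if W (σ t i) ω = ℓ then (1 : ℝ) else 0)
    - (N : ℝ) * (p m * p ℓ)|} with hE
  have hincl : {ω | ε <
      |(1 / (N : ℝ)) * ∑ t : Fin d, ∑ i : Fin N,
        (if W i ω = m then (1 : ℝ) else 0) *
          (if W (σ t i) ω = ℓ then (1 : ℝ) else 0) - (d : ℝ) * (p m * p ℓ)|} ⊆
      ⋃ t : Fin d, E t := by
    intro ω hω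
    by_contra hc
    simp only [Set.mem_iUnion, not_exists] at hc
    have hsmall : ∀ t : Fin d, |∑ i : Fin N,
        (if W i ω = m then (1 : ℝ) else 0) * (if W (σ t i) ω = ℓ then (1 : ℝ) else 0)
        - (N : ℝ) * (p m * p ℓ)| < s := by
      intro t
      have := hc t
      rw [hE] at this
      simp only [Set.mem_setOf_eq, not_le] at this
      exact this
    have hsumlt : |∑ t : Fin d, (∑ i : Fin N,
        (if W i ω = m then (1 : ℝ) else 0) * (if W (σ t i) ω = ℓ then (1 : ℝ) else 0)
        - (N : ℝ) * (p m * p ℓ))| < (d : ℝ) * s := by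
      calc |∑ t : Fin d, (∑ i : Fin N,
          (if W i ω = m then (1 : ℝ) else 0) * (if W (σ t i) ω = ℓ then (1 : ℝ) else 0)
          - (N : ℝ) * (p m * p ℓ))|
          ≤ ∑ t : Fin d, |∑ i : Fin N,
            (if W i ω = m then (1 : ℝ) else 0) * (if W (σ t i) ω = ℓ then (1 : ℝ) else 0)
            - (N : ℝ) * (p m * p ℓ)| := Finset.abs_sum_le_sum_abs _ _
        _ < ∑ _t : Fin d, s := by
            apply Finset.sum_lt_sum_of_nonempty
            · exact Finset.univ_nonempty_iff.mpr (Fin.pos_iff_nonempty.mp hd)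
            · exact fun t _ => hsmall t
        _ = (d : ℝ) * s := by rw [Finset.sum_const]; simp [mul_comm]
    have heq : (1 / (N : ℝ)) * ∑ t : Fin d, ∑ i : Fin N,
        (if W i ω = m then (1 : ℝ) else 0) * (if W (σ t i) ω = ℓ then (1 : ℝ) else 0)
        - (d : ℝ) * (p m * p ℓ) = (1 / (N : ℝ)) * ∑ t : Fin d, (∑ i : Fin N,
        (if W i ω = m then (1 : ℝ) else 0) * (if W (σ t i) ω = ℓ then (1 : ℝ) else 0)
        - (N : ℝ) * (p m * p ℓ)) := by
      rw [Finset.sum_sub_distrib]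
      rw [mul_sub]
      congr 1
      rw [Finset.sum_const]
      simp only [Finset.card_univ, Fintype.card_fin, nsmul_eq_mul]
      field_simp
    rw [Set.mem_setOf_eq, heq, abs_mul, abs_of_pos (by positivity : (0:ℝ) < 1 / (N:ℝ))] at hω
    have : (1 / (N : ℝ)) * ((d : ℝ) * s) = ε := by
      rw [hsdef]; field_simp
    have hlt : (1 / (N : ℝ)) * |∑ t : Fin d, (∑ i : Fin N,
        (if W i ω = m then (1 : ℝ) else 0) * (if W (σ t i) ω = ℓ then (1 : ℝ) else 0)
        - (N : ℝ) * (p m * p ℓ))| < ε := by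
      rw [← this]
      exact mul_lt_mul_of_pos_left hsumlt (by positivity)
    linarith
  have hexp : -s ^ 2 / (N : ℝ) = -(N : ℝ) * ε ^ 2 / (d : ℝ) ^ 2 := by
    rw [hsdef]
    field_simp
  calc μ {ω | ε <
      |(1 / (N : ℝ)) * ∑ t : Fin d, ∑ i : Fin N,
        (if W i ω = m then (1 : ℝ) else 0) *
          (if W (σ t i) ω = ℓ then (1 : ℝ) else 0) - (d : ℝ) * (p m * p ℓ)|}
      ≤ μ (⋃ t : Fin d, E t) := measure_mono hincl
    _ ≤ ∑ t : Fin d, μ (E t) := measure_iUnion_fintype_le _ _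
    _ ≤ ∑ _t : Fin d, ENNReal.ofReal (2 * Real.exp (-s ^ 2 / N)) := by
        refine Finset.sum_le_sum (fun t _ => ?_)
        exact matching_bound μ hN (σ t) (hσinv t) (hσnf t) p hp0 hp1 W hWmeas hindep hlaw
          m ℓ s hs
    _ = ENNReal.ofReal (2 * (d : ℝ) * Real.exp (-(N : ℝ) * ε ^ 2 / (d : ℝ) ^ 2)) := by
        rw [Finset.sum_const, hexp]
        simp only [Finset.card_univ, Fintype.card_fin, nsmul_eq_mul]
        rw [← ENNReal.ofReal_natCast d, ← ENNReal.ofReal_mul (by positivity)]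
        congr 1
        ring
end

section
/- Let N, d, K be positive integers, let σ_1, …, σ_d : Fin N → Fin N be fixed-point-free involutions (permutations with σ_t ∘ σ_t = id and σ_t i ≠ i for all i), and for u : Fin N → Fin K and m, ℓ ∈ Fin K set Q_{m,ℓ}(u) = (1/N) ∑_{t=1}^d ∑_{i∈Fin N} 1{u i = m}·1{u(σ_t i) = ℓ}. Let n : Fin K → ℕ with ∑_k n_k = N, and fix w : Fin N → Fin K whose fiber over each k has exactly n_k elements. Then for every ε > 0 there exist constants C, c > 0, depending only on ε and d (not on N, K, n, w, the matchings, or the joint law), such that the following holds: whenever V and W are random maps Fin N → Fin K defined on a common probability space (with arbitrary dependence between V and W), where V is distributed as w ∘ π for π a uniformly distributed random permutation of Fin N, and W has i.i.d. coordinates with P(W_i = k) = n_k/N for all i and k, one has P( | Q_{m,ℓ}(V) − Q_{m,ℓ}(W) | > ε ) ≤ C·exp(−c N) for all m, ℓ ∈ Fin K. -/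
open MeasureTheory ProbabilityTheory ENNReal Finset Equiv



/-- quadratic exp bound for |y| ≤ 1 -/
lemma exp_le_one_add_add_sq {y : ℝ} (hy : |y| ≤ 1) : Real.exp y ≤ 1 + y + y ^ 2 := by
  have h := Real.exp_bound hy (by norm_num : (0:ℕ) < 2)
  simp only [Finset.sum_range_succ, Finset.sum_range_zero, pow_zero, pow_one,
    Nat.factorial] at h
  norm_num at h
  have h2 := (abs_le.1 h).2
  nlinarith [sq_abs y, sq_nonneg y]

/-- weighted mgf bound for bounded values -/
lemma weighted_exp_bound {ι : Type*} [Fintype ι] (q x : ι → ℝ) (B lam xbar : ℝ)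
    (hq : ∀ i, 0 ≤ q i) (hq1 : ∑ i, q i = 1) (hxbar : xbar = ∑ i, q i * x i)
    (hB : ∀ i, |x i - xbar| ≤ B) (hlam : 0 ≤ lam) (hlB : lam * B ≤ 1) :
    ∑ i, q i * Real.exp (lam * x i) ≤ Real.exp (lam * xbar + lam ^ 2 * B ^ 2) := by
  have key : ∀ i, Real.exp (lam * (x i - xbar)) ≤ 1 + lam * (x i - xbar) + (lam * (x i - xbar)) ^ 2 := by
    intro i
    apply exp_le_one_add_add_sq
    rw [abs_mul, abs_of_nonneg hlam]
    calc lam * |x i - xbar| ≤ lam * B := by nlinarith [hB i, abs_nonneg (x i - xbar)]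
      _ ≤ 1 := hlB
  have hz : ∑ i, q i * (lam * (x i - xbar)) = 0 := by
    have h1 : ∀ i, q i * (lam * (x i - xbar)) = lam * (q i * x i) - lam * xbar * q i :=
      fun i => by ring
    simp only [h1, Finset.sum_sub_distrib, ← Finset.mul_sum, ← hxbar, hq1]
    ring
  have hsq : ∑ i, q i * (lam * (x i - xbar)) ^ 2 ≤ lam ^ 2 * B ^ 2 := by
    calc ∑ i, q i * (lam * (x i - xbar)) ^ 2 ≤ ∑ i, q i * (lam ^ 2 * B ^ 2) := by
          apply Finset.sum_le_sum; intro i _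
          apply mul_le_mul_of_nonneg_left _ (hq i)
          rw [mul_pow]
          apply mul_le_mul_of_nonneg_left _ (sq_nonneg lam)
          nlinarith [hB i, abs_nonneg (x i - xbar), sq_abs (x i - xbar)]
      _ = lam ^ 2 * B ^ 2 := by rw [← Finset.sum_mul, hq1, one_mul]
  have step : ∑ i, q i * Real.exp (lam * (x i - xbar)) ≤ 1 + lam ^ 2 * B ^ 2 := by
    calc ∑ i, q i * Real.exp (lam * (x i - xbar))
        ≤ ∑ i, q i * (1 + lam * (x i - xbar) + (lam * (x i - xbar)) ^ 2) :=
          Finset.sum_le_sum fun i _ => mul_le_mul_of_nonneg_left (key i) (hq i)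
      _ = 1 + ∑ i, q i * (lam * (x i - xbar)) ^ 2 := by
          simp only [mul_add, mul_one, Finset.sum_add_distrib, hq1, hz]
          ring
      _ ≤ 1 + lam ^ 2 * B ^ 2 := by linarith
  calc ∑ i, q i * Real.exp (lam * x i)
      = Real.exp (lam * xbar) * ∑ i, q i * Real.exp (lam * (x i - xbar)) := by
        rw [Finset.mul_sum]
        apply Finset.sum_congr rfl; intro i _
        rw [mul_sub, Real.exp_sub]; field_simp
    _ ≤ Real.exp (lam * xbar) * (1 + lam ^ 2 * B ^ 2) :=
        mul_le_mul_of_nonneg_left step (Real.exp_nonneg _)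
    _ ≤ Real.exp (lam * xbar) * Real.exp (lam ^ 2 * B ^ 2) := by
        apply mul_le_mul_of_nonneg_left _ (Real.exp_nonneg _)
        linarith [Real.add_one_le_exp (lam ^ 2 * B ^ 2)]
    _ = Real.exp (lam * xbar + lam ^ 2 * B ^ 2) := (Real.exp_add _ _).symm


section cube
variable {K : ℕ}

lemma cube_weight_one {n : ℕ} (p : Fin K → ℝ) (hp1 : ∑ k, p k = 1) :
    ∑ u : Fin n → Fin K, ∏ i, p (u i) = 1 := by
  have h := Finset.prod_univ_sum (fun _ : Fin n => (Finset.univ : Finset (Fin K)))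
      (fun _ k => p k)
  rw [Fintype.piFinset_univ] at h
  rw [← h]
  simp [hp1]

lemma cube_reindex {n : ℕ} (p : Fin K → ℝ) (F : (Fin (n+1) → Fin K) → ℝ) :
    ∑ u : Fin (n+1) → Fin K, (∏ i, p (u i)) * F u
      = ∑ x : Fin K, p x * ∑ v : Fin n → Fin K, (∏ i, p (v i)) * F (Fin.cons x v) := by
  rw [← Fintype.sum_equiv (Fin.consEquiv (fun _ => Fin K))
    (fun y : Fin K × (Fin n → Fin K) =>
      (∏ i, p ((Fin.cons y.1 y.2 : Fin (n+1) → Fin K) i)) * F (Fin.cons y.1 y.2))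
    (fun u => (∏ i, p (u i)) * F u) (fun y => by rfl)]
  rw [Fintype.sum_prod_type]
  apply Finset.sum_congr rfl; intro x _
  rw [Finset.mul_sum]
  apply Finset.sum_congr rfl; intro v _
  rw [Fin.prod_univ_succ]
  simp [mul_assoc]

lemma cube_mgf : ∀ (n : ℕ) (p : Fin K → ℝ) (_hp : ∀ k, 0 ≤ p k) (_hp1 : ∑ k, p k = 1)
    (f : (Fin n → Fin K) → ℝ) (c lam : ℝ)
    (_hc : ∀ u i x, |f (Function.update u i x) - f u| ≤ c)
    (_hlam : 0 ≤ lam) (_hlc : lam * c ≤ 1),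
    (0 < K) →
    ∑ u : Fin n → Fin K, (∏ i, p (u i)) * Real.exp (lam * f u) ≤
      Real.exp (lam * (∑ u : Fin n → Fin K, (∏ i, p (u i)) * f u) + lam ^ 2 * c ^ 2 * n) := by
  intro n
  induction n with
  | zero =>
    intro p hp hp1 f c lam hc hlam hlc hK
    rw [Fintype.sum_subsingleton _ (Fin.elim0 : Fin 0 → Fin K),
        Fintype.sum_subsingleton _ (Fin.elim0 : Fin 0 → Fin K)]
    simp
  | succ n ih =>
    intro p hp hp1 f c lam hc hlam hlc hK
    have hc0 : 0 ≤ c := by simpa using hc (fun _ => (⟨0, hK⟩ : Fin K)) 0 ⟨0, hK⟩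
    -- block means
    set g : Fin K → ℝ := fun x => ∑ v : Fin n → Fin K, (∏ i, p (v i)) * f (Fin.cons x v) with hg
    have hW1 : ∑ v : Fin n → Fin K, ∏ i, p (v i) = 1 := cube_weight_one p hp1
    -- pairwise bound on g
    have hgpair : ∀ x x', g x - g x' ≤ c := by
      intro x x'
      have : g x - g x' = ∑ v : Fin n → Fin K, (∏ i, p (v i)) * (f (Fin.cons x v) - f (Fin.cons x' v)) := by
        simp [hg, ← Finset.sum_sub_distrib, mul_sub]
      rw [this]
      calc ∑ v : Fin n → Fin K, (∏ i, p (v i)) * (f (Fin.cons x v) - f (Fin.cons x' v))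
          ≤ ∑ v : Fin n → Fin K, (∏ i, p (v i)) * c := by
            apply Finset.sum_le_sum; intro v _
            apply mul_le_mul_of_nonneg_left _ (Finset.prod_nonneg fun i _ => hp _)
            have := hc (Fin.cons x' v) 0 x
            rw [Fin.update_cons_zero] at this
            exact le_trans (le_abs_self _) this
        _ = c := by rw [← Finset.sum_mul, hW1, one_mul]
    -- mean of g equals total mean
    have hmean : ∑ x, p x * g x = ∑ u : Fin (n+1) → Fin K, (∏ i, p (u i)) * f u :=
      (cube_reindex p f).symm
    have hgbar : ∀ x, |g x - ∑ x', p x' * g x'| ≤ c := by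
      intro x
      have h1 : g x - ∑ x', p x' * g x' = ∑ x', p x' * (g x - g x') := by
        simp [mul_sub, Finset.sum_sub_distrib, ← Finset.sum_mul, hp1]
      rw [abs_le]; constructor
      · have : ∑ x', p x' * (g x' - g x) ≤ ∑ x', p x' * c :=
          Finset.sum_le_sum fun x' _ => mul_le_mul_of_nonneg_left (hgpair x' x) (hp x')
        rw [← Finset.sum_mul, hp1, one_mul] at this
        have h2 : (∑ x', p x' * g x') - g x = ∑ x', p x' * (g x' - g x) := by
          simp [mul_sub, Finset.sum_sub_distrib, ← Finset.sum_mul, hp1]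
        linarith
      · have : ∑ x', p x' * (g x - g x') ≤ ∑ x', p x' * c :=
          Finset.sum_le_sum fun x' _ => mul_le_mul_of_nonneg_left (hgpair x x') (hp x')
        rw [← Finset.sum_mul, hp1, one_mul] at this
        linarith [h1 ▸ this]
    -- assemble
    rw [cube_reindex p (fun u => Real.exp (lam * f u))]
    have step1 : ∀ x : Fin K,
        ∑ v : Fin n → Fin K, (∏ i, p (v i)) * Real.exp (lam * f (Fin.cons x v))
          ≤ Real.exp (lam * g x + lam ^ 2 * c ^ 2 * n) := by
      intro x
      apply ih p hp hp1 (fun v => f (Fin.cons x v)) c lam _ hlam hlc hK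
      intro v i y
      have hcu : (Fin.cons x (Function.update v i y) : Fin (n+1) → Fin K)
          = Function.update (Fin.cons x v) i.succ y := by
        funext j
        refine Fin.cases ?_ (fun j => ?_) j
        · simp [Function.update_apply, (Fin.succ_ne_zero i).symm]
        · simp [Function.update_apply, Fin.succ_inj]
      simp only [hcu]
      exact hc _ _ _
    calc ∑ x : Fin K, p x * ∑ v : Fin n → Fin K, (∏ i, p (v i)) * Real.exp (lam * f (Fin.cons x v))
        ≤ ∑ x : Fin K, p x * (Real.exp (lam * g x) * Real.exp (lam ^ 2 * c ^ 2 * n)) := by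
          apply Finset.sum_le_sum; intro x _
          apply mul_le_mul_of_nonneg_left _ (hp x)
          rw [← Real.exp_add]; exact step1 x
      _ = (∑ x : Fin K, p x * Real.exp (lam * g x)) * Real.exp (lam ^ 2 * c ^ 2 * n) := by
          rw [Finset.sum_mul]; apply Finset.sum_congr rfl; intro x _; ring
      _ ≤ Real.exp (lam * (∑ x, p x * g x) + lam ^ 2 * c ^ 2) * Real.exp (lam ^ 2 * c ^ 2 * n) := by
          apply mul_le_mul_of_nonneg_right _ (Real.exp_nonneg _)
          exact weighted_exp_bound p g c lam _ hp hp1 rfl hgbar hlam hlc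
      _ = Real.exp (lam * (∑ u : Fin (n+1) → Fin K, (∏ i, p (u i)) * f u) + lam ^ 2 * c ^ 2 * (n+1)) := by
          rw [← Real.exp_add, hmean]; ring_nf
      _ = _ := by push_cast; ring_nf
end cube


-- helper: decomposeFin.symm (p, s) = swap 0 p * decomposeFin.symm (0, s)
lemma decomp_eq {n : ℕ} (p : Fin (n+1)) (s : Perm (Fin n)) :
    (Equiv.Perm.decomposeFin.symm (p, s) : Perm (Fin (n+1)))
      = Equiv.swap 0 p * Equiv.Perm.decomposeFin.symm (0, s) := by
  ext j
  refine Fin.cases ?_ (fun j => ?_) j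
  · simp [Equiv.Perm.decomposeFin_symm_apply_zero]
  · simp [Equiv.Perm.decomposeFin_symm_apply_succ]

lemma decomp_mul {n : ℕ} (t s : Perm (Fin n)) :
    (Equiv.Perm.decomposeFin.symm (0, t * s) : Perm (Fin (n+1)))
      = Equiv.Perm.decomposeFin.symm (0, t) * Equiv.Perm.decomposeFin.symm (0, s) := by
  ext j
  refine Fin.cases ?_ (fun j => ?_) j
  · simp [Equiv.Perm.decomposeFin_symm_apply_zero]
  · simp [Equiv.Perm.decomposeFin_symm_apply_succ]

lemma decomp_swap {n : ℕ} (a b : Fin n) :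
    (Equiv.Perm.decomposeFin.symm (0, Equiv.swap a b) : Perm (Fin (n+1)))
      = Equiv.swap a.succ b.succ := by
  ext j
  refine Fin.cases ?_ (fun j => ?_) j
  · simp [Equiv.Perm.decomposeFin_symm_apply_zero,
      Equiv.swap_apply_of_ne_of_ne (Fin.succ_ne_zero a).symm (Fin.succ_ne_zero b).symm]
  · rw [Equiv.Perm.decomposeFin_symm_apply_succ]
    rcases eq_or_ne j a with rfl | hja
    · simp
    · rcases eq_or_ne j b with rfl | hjb
      · simp
      · rw [Equiv.swap_apply_of_ne_of_ne hja hjb, Equiv.swap_apply_of_ne_of_ne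
          (fun h => hja (Fin.succ_injective _ h)) (fun h => hjb (Fin.succ_injective _ h))]
        simp

lemma perm_mgf : ∀ (n : ℕ) (f : Perm (Fin n) → ℝ) (c lam : ℝ)
    (_hc : ∀ (e : Perm (Fin n)) (a b : Fin n), |f (Equiv.swap a b * e) - f e| ≤ c)
    (_hlam : 0 ≤ lam) (_hlc : lam * (2 * c) ≤ 1),
    ∑ e : Perm (Fin n), ((Fintype.card (Perm (Fin n)) : ℝ))⁻¹ * Real.exp (lam * f e) ≤
      Real.exp (lam * (∑ e : Perm (Fin n), ((Fintype.card (Perm (Fin n)) : ℝ))⁻¹ * f e)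
        + 4 * lam ^ 2 * c ^ 2 * n) := by
  intro n
  induction n with
  | zero =>
    intro f c lam hc hlam hlc
    rw [Fintype.sum_subsingleton _ (1 : Perm (Fin 0)),
        Fintype.sum_subsingleton _ (1 : Perm (Fin 0))]
    simp
  | succ n ih =>
    intro f c lam hc hlam hlc
    have hc0 : 0 ≤ c := by
      have h := hc 1 0 0
      have h2 : (Equiv.swap (0 : Fin (n+1)) 0 * 1 : Perm (Fin (n+1))) = 1 := by
        ext x; simp [Equiv.swap_self]
      rw [h2] at h
      simpa using h
    set κ : ℝ := ((Fintype.card (Perm (Fin n)) : ℝ))⁻¹ with hκ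
    set κ' : ℝ := ((Fintype.card (Perm (Fin (n+1))) : ℝ))⁻¹ with hκ'
    have hcard : (Fintype.card (Perm (Fin (n+1))) : ℝ)
        = (n+1) * (Fintype.card (Perm (Fin n)) : ℝ) := by
      rw [Fintype.card_perm, Fintype.card_perm, Fintype.card_fin, Fintype.card_fin,
        Nat.factorial_succ]
      push_cast; ring
    have hcpos : (0:ℝ) < (Fintype.card (Perm (Fin n)) : ℝ) := by
      exact_mod_cast Fintype.card_pos
    have hκ'eq : κ' = ((n:ℝ)+1)⁻¹ * κ := by
      rw [hκ', hκ, hcard, mul_inv]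
    -- reindex
    have reidx : ∀ (F : Perm (Fin (n+1)) → ℝ),
        ∑ e : Perm (Fin (n+1)), κ' * F e
          = ∑ p : Fin (n+1), ((n:ℝ)+1)⁻¹ *
              ∑ s : Perm (Fin n), κ * F (Equiv.Perm.decomposeFin.symm (p, s)) := by
      intro F
      rw [← Fintype.sum_equiv (Equiv.Perm.decomposeFin.symm)
        (fun y : Fin (n+1) × Perm (Fin n) => κ' * F (Equiv.Perm.decomposeFin.symm y))
        (fun e => κ' * F e) (fun y => rfl)]
      rw [Fintype.sum_prod_type]
      apply Finset.sum_congr rfl; intro p _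
      rw [Finset.mul_sum]
      apply Finset.sum_congr rfl; intro s _
      rw [hκ'eq]; ring
    -- block means
    set g : Fin (n+1) → ℝ := fun p => ∑ s : Perm (Fin n), κ * f (Equiv.Perm.decomposeFin.symm (p, s)) with hg
    have hκsum : ∑ _s : Perm (Fin n), κ = 1 := by
      rw [Finset.sum_const, Finset.card_univ, nsmul_eq_mul, hκ, mul_inv_cancel₀ (ne_of_gt hcpos)]
    have hgpair : ∀ p p', g p - g p' ≤ 2 * c := by
      intro p p'
      have hpt : ∀ s : Perm (Fin n), f (Equiv.Perm.decomposeFin.symm (p, s))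
          - f (Equiv.Perm.decomposeFin.symm (p', s)) ≤ 2 * c := by
        intro s
        set E := (Equiv.Perm.decomposeFin.symm (0, s) : Perm (Fin (n+1)))
        have h1 : Equiv.Perm.decomposeFin.symm (p, s) = Equiv.swap 0 p * E := decomp_eq p s
        have h2 : Equiv.Perm.decomposeFin.symm (p', s) = Equiv.swap 0 p' * E := decomp_eq p' s
        have b1 : |f (Equiv.swap 0 p * E) - f E| ≤ c := hc E 0 p
        have b2 : |f (Equiv.swap 0 p' * E) - f E| ≤ c := hc E 0 p'
        rw [h1, h2]
        have := abs_le.1 b1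
        have := abs_le.1 b2
        linarith [(abs_le.1 b1).2, (abs_le.1 b2).1]
      calc g p - g p' = ∑ s : Perm (Fin n), κ * (f (Equiv.Perm.decomposeFin.symm (p, s))
            - f (Equiv.Perm.decomposeFin.symm (p', s))) := by
            simp [hg, ← Finset.sum_sub_distrib, mul_sub]
        _ ≤ ∑ _s : Perm (Fin n), κ * (2 * c) := by
            apply Finset.sum_le_sum; intro s _
            exact mul_le_mul_of_nonneg_left (hpt s) (by positivity)
        _ = 2 * c := by rw [← Finset.sum_mul, hκsum, one_mul]
    have hmean : ∑ p, ((n:ℝ)+1)⁻¹ * g p = ∑ e : Perm (Fin (n+1)), κ' * f e := (reidx f).symm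
    have hq1 : ∑ _p : Fin (n+1), ((n:ℝ)+1)⁻¹ = 1 := by
      rw [Finset.sum_const, Finset.card_univ, Fintype.card_fin, nsmul_eq_mul]
      push_cast
      first
        | rfl
        | exact mul_inv_cancel₀ (by positivity)
    have hgbar : ∀ p, |g p - ∑ p', ((n:ℝ)+1)⁻¹ * g p'| ≤ 2 * c := by
      intro p
      have h1 : g p - ∑ p', ((n:ℝ)+1)⁻¹ * g p' = ∑ p', ((n:ℝ)+1)⁻¹ * (g p - g p') := by
        simp only [mul_sub, Finset.sum_sub_distrib]
        rw [← Finset.sum_mul, hq1]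
        simp [Finset.sum_const, Finset.card_univ]
      have h2 : (∑ p', ((n:ℝ)+1)⁻¹ * g p') - g p = ∑ p', ((n:ℝ)+1)⁻¹ * (g p' - g p) := by
        simp only [mul_sub, Finset.sum_sub_distrib]
        rw [← Finset.sum_mul, hq1]
        simp [Finset.sum_const, Finset.card_univ]
      have b1 : ∑ p', ((n:ℝ)+1)⁻¹ * (g p - g p') ≤ ∑ _p' : Fin (n+1), ((n:ℝ)+1)⁻¹ * (2*c) :=
        Finset.sum_le_sum fun p' _ => mul_le_mul_of_nonneg_left (hgpair p p') (by positivity)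
      have b2 : ∑ p', ((n:ℝ)+1)⁻¹ * (g p' - g p) ≤ ∑ _p' : Fin (n+1), ((n:ℝ)+1)⁻¹ * (2*c) :=
        Finset.sum_le_sum fun p' _ => mul_le_mul_of_nonneg_left (hgpair p' p) (by positivity)
      rw [← Finset.sum_mul, hq1, one_mul] at b1 b2
      rw [abs_le]; constructor <;> [linarith [h2 ▸ b2]; linarith [h1 ▸ b1]]
    -- inner IH
    have step1 : ∀ p : Fin (n+1),
        ∑ s : Perm (Fin n), κ * Real.exp (lam * f (Equiv.Perm.decomposeFin.symm (p, s)))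
          ≤ Real.exp (lam * g p + 4 * lam ^ 2 * c ^ 2 * n) := by
      intro p
      apply ih (fun s => f (Equiv.Perm.decomposeFin.symm (p, s))) c lam _ hlam hlc
      intro s a b
      have key : Equiv.Perm.decomposeFin.symm (p, Equiv.swap a b * s)
          = Equiv.swap (Equiv.swap 0 p a.succ) (Equiv.swap 0 p b.succ)
              * Equiv.Perm.decomposeFin.symm (p, s) := by
        rw [decomp_eq p (Equiv.swap a b * s), decomp_mul, decomp_swap, decomp_eq p s,
          Equiv.swap_apply_apply]
        group
      rw [key]
      exact hc _ _ _
    rw [reidx (fun e => Real.exp (lam * f e))]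
    calc ∑ p : Fin (n+1), ((n:ℝ)+1)⁻¹ *
            ∑ s : Perm (Fin n), κ * Real.exp (lam * f (Equiv.Perm.decomposeFin.symm (p, s)))
        ≤ ∑ p : Fin (n+1), ((n:ℝ)+1)⁻¹ *
            (Real.exp (lam * g p) * Real.exp (4 * lam ^ 2 * c ^ 2 * n)) := by
          apply Finset.sum_le_sum; intro p _
          apply mul_le_mul_of_nonneg_left _ (by positivity)
          rw [← Real.exp_add]; exact step1 p
      _ = (∑ p : Fin (n+1), ((n:ℝ)+1)⁻¹ * Real.exp (lam * g p)) * Real.exp (4 * lam ^ 2 * c ^ 2 * n) := by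
          rw [Finset.sum_mul]; apply Finset.sum_congr rfl; intro p _; ring
      _ ≤ Real.exp (lam * (∑ p, ((n:ℝ)+1)⁻¹ * g p) + lam ^ 2 * (2*c) ^ 2)
            * Real.exp (4 * lam ^ 2 * c ^ 2 * n) := by
          apply mul_le_mul_of_nonneg_right _ (Real.exp_nonneg _)
          exact weighted_exp_bound (fun _ => ((n:ℝ)+1)⁻¹) g (2*c) lam _ (fun _ => by positivity)
            hq1 rfl hgbar hlam hlc
      _ = Real.exp (lam * (∑ e : Perm (Fin (n+1)), κ' * f e) + 4 * lam ^ 2 * c ^ 2 * (n+1)) := by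
          rw [← Real.exp_add, hmean]; ring_nf
      _ = _ := by push_cast; ring_nf


noncomputable def Qfun (N K dd : ℕ) (σ : Fin dd → Fin N → Fin N) (m ℓ : Fin K)
    (u : Fin N → Fin K) : ℝ :=
  (1 / (N : ℝ)) * ∑ t : Fin dd, ∑ i : Fin N,
    (if u i = m then (1 : ℝ) else 0) * (if u (σ t i) = ℓ then (1 : ℝ) else 0)

lemma Qfun_lip_update {N K dd : ℕ} (σ : Fin dd → Fin N → Fin N) (m ℓ : Fin K)
    (hσ2 : ∀ t i, σ t (σ t i) = i)
    (u : Fin N → Fin K) (j : Fin N) (x : Fin K) :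
    |Qfun N K dd σ m ℓ (Function.update u j x) - Qfun N K dd σ m ℓ u| ≤ 2 * dd / N := by
  have hN : 0 < N := j.pos
  set u' := Function.update u j x with hu'
  set T : (Fin N → Fin K) → Fin dd → Fin N → ℝ := fun v t i =>
    (if v i = m then (1 : ℝ) else 0) * (if v (σ t i) = ℓ then (1 : ℝ) else 0) with hT
  have hvanish : ∀ t i, i ≠ j → i ≠ σ t j → T u' t i - T u t i = 0 := by
    intro t i hij hisj
    have h1 : u' i = u i := Function.update_of_ne hij _ _
    have h2 : u' (σ t i) = u (σ t i) := by
      apply Function.update_of_ne _ _ _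
      intro h
      exact hisj (by rw [← hσ2 t i, h])
    simp [hT, h1, h2]
  have habs : ∀ (v v' : Fin N → Fin K) (t : Fin dd) (i : Fin N), |T v' t i - T v t i| ≤ 1 := by
    intro v v' t i
    simp only [hT]
    split_ifs <;> norm_num
  have hper_t : ∀ t, |∑ i, (T u' t i - T u t i)| ≤ 2 := by
    intro t
    have hsub : ∑ i, (T u' t i - T u t i) = ∑ i ∈ ({j, σ t j} : Finset (Fin N)), (T u' t i - T u t i) := by
      refine (Finset.sum_subset (Finset.subset_univ _) ?_).symm
      intro i _ hnot
      simp only [Finset.mem_insert, Finset.mem_singleton, not_or] at hnot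
      exact hvanish t i hnot.1 hnot.2
    rw [hsub]
    calc |∑ i ∈ ({j, σ t j} : Finset (Fin N)), (T u' t i - T u t i)|
        ≤ ∑ i ∈ ({j, σ t j} : Finset (Fin N)), |T u' t i - T u t i| :=
          Finset.abs_sum_le_sum_abs _ _
      _ ≤ ∑ _i ∈ ({j, σ t j} : Finset (Fin N)), (1:ℝ) :=
          Finset.sum_le_sum fun i _ => habs u u' t i
      _ = (({j, σ t j} : Finset (Fin N)).card : ℝ) := by rw [Finset.sum_const]; simp
      _ ≤ 2 := by
          have := Finset.card_insert_le j ({σ t j} : Finset (Fin N))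
          have h2 : ({σ t j} : Finset (Fin N)).card = 1 := Finset.card_singleton _
          exact_mod_cast le_trans (Nat.cast_le.2 this) (by rw [h2]; norm_num)
  have hdiff : Qfun N K dd σ m ℓ u' - Qfun N K dd σ m ℓ u
      = (1 / (N:ℝ)) * ∑ t, ∑ i, (T u' t i - T u t i) := by
    rw [Qfun, Qfun]
    rw [← mul_sub, ← Finset.sum_sub_distrib]
    congr 1
    apply Finset.sum_congr rfl; intro t _
    rw [← Finset.sum_sub_distrib]
  rw [hdiff, abs_mul]
  have hNpos : (0:ℝ) < N := by exact_mod_cast hN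
  calc |1/(N:ℝ)| * |∑ t, ∑ i, (T u' t i - T u t i)|
      ≤ (1/(N:ℝ)) * ∑ t : Fin dd, (2:ℝ) := by
        apply mul_le_mul
        · rw [abs_of_pos (by positivity)]
        · calc |∑ t, ∑ i, (T u' t i - T u t i)| ≤ ∑ t, |∑ i, (T u' t i - T u t i)| :=
              Finset.abs_sum_le_sum_abs _ _
            _ ≤ ∑ _t : Fin dd, (2:ℝ) := Finset.sum_le_sum fun t _ => hper_t t
        · exact abs_nonneg _
        · positivity
    _ = 2 * dd / N := by rw [Finset.sum_const]; simp; ring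

lemma Qfun_lip_swap {N K dd : ℕ} (σ : Fin dd → Fin N → Fin N) (m ℓ : Fin K)
    (hσ2 : ∀ t i, σ t (σ t i) = i) (w : Fin N → Fin K)
    (e : Perm (Fin N)) (a b : Fin N) :
    |Qfun N K dd σ m ℓ (fun i => w ((Equiv.swap a b * e) i))
      - Qfun N K dd σ m ℓ (fun i => w (e i))| ≤ 2 * (2 * dd / N) := by
  rcases eq_or_ne a b with rfl | hab
  · simp [Equiv.swap_self]
    positivity
  · set u : Fin N → Fin K := fun i => w (e i) with hu
    have key : (fun i => w ((Equiv.swap a b * e) i))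
        = Function.update (Function.update u (e.symm a) (w b)) (e.symm b) (w a) := by
      funext i
      simp only [Perm.mul_apply]
      rcases eq_or_ne i (e.symm b) with rfl | hib
      · rw [Function.update_self]
        simp [Equiv.swap_apply_of_ne_of_ne, Equiv.apply_symm_apply, hab.symm]
      · rw [Function.update_of_ne hib]
        rcases eq_or_ne i (e.symm a) with rfl | hia
        · rw [Function.update_self]
          simp [Equiv.apply_symm_apply]
        · rw [Function.update_of_ne hia, hu]
          have h1 : e i ≠ a := fun h => hia (by rw [← h, Equiv.symm_apply_apply])
          have h2 : e i ≠ b := fun h => hib (by rw [← h, Equiv.symm_apply_apply])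
          rw [Equiv.swap_apply_of_ne_of_ne h1 h2]
    rw [key]
    have t1 := Qfun_lip_update σ m ℓ hσ2 (Function.update u (e.symm a) (w b)) (e.symm b) (w a)
    have t2 := Qfun_lip_update σ m ℓ hσ2 u (e.symm a) (w b)
    calc |Qfun N K dd σ m ℓ (Function.update (Function.update u (e.symm a) (w b)) (e.symm b) (w a))
          - Qfun N K dd σ m ℓ u|
        ≤ |Qfun N K dd σ m ℓ (Function.update (Function.update u (e.symm a) (w b)) (e.symm b) (w a))
            - Qfun N K dd σ m ℓ (Function.update u (e.symm a) (w b))|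
          + |Qfun N K dd σ m ℓ (Function.update u (e.symm a) (w b)) - Qfun N K dd σ m ℓ u| :=
          abs_sub_le _ _ _
      _ ≤ 2 * dd / N + 2 * dd / N := add_le_add t1 t2
      _ = 2 * (2 * dd / N) := by ring

/-- generic Chernoff tail from an mgf bound -/
lemma weighted_tail {ι : Type*} [Fintype ι] (ρ f : ι → ℝ) (fbar t lam M : ℝ)
    (hρ : ∀ i, 0 ≤ ρ i) (hlam : 0 ≤ lam)
    (hmgf : ∑ i, ρ i * Real.exp (lam * f i) ≤ Real.exp (lam * fbar + M))
    (S : Finset ι) (hS : ∀ i ∈ S, fbar + t < f i) :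
    ∑ i ∈ S, ρ i ≤ Real.exp (M - lam * t) := by
  have h1 : (∑ i ∈ S, ρ i) * Real.exp (lam * (fbar + t)) ≤ Real.exp (lam * fbar + M) := by
    rw [Finset.sum_mul]
    calc ∑ i ∈ S, ρ i * Real.exp (lam * (fbar + t))
        ≤ ∑ i ∈ S, ρ i * Real.exp (lam * f i) := by
          apply Finset.sum_le_sum; intro i hi
          apply mul_le_mul_of_nonneg_left _ (hρ i)
          apply Real.exp_le_exp.2
          exact mul_le_mul_of_nonneg_left (le_of_lt (hS i hi)) hlam
      _ ≤ ∑ i, ρ i * Real.exp (lam * f i) := by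
          apply Finset.sum_le_sum_of_subset_of_nonneg (Finset.subset_univ _)
          intro i _ _
          exact mul_nonneg (hρ i) (Real.exp_nonneg _)
      _ ≤ Real.exp (lam * fbar + M) := hmgf
  have h2 : (0:ℝ) < Real.exp (lam * (fbar + t)) := Real.exp_pos _
  rw [← le_div_iff₀ h2] at h1
  calc ∑ i ∈ S, ρ i ≤ Real.exp (lam * fbar + M) / Real.exp (lam * (fbar + t)) := h1
    _ = Real.exp (M - lam * t) := by rw [← Real.exp_sub]; ring_nf


/-- two-point marginal on the cube -/
lemma cube_two_point {N K : ℕ} (p : Fin K → ℝ) (hp1 : ∑ k, p k = 1)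
    (i₀ j₀ : Fin N) (hij : i₀ ≠ j₀) (m ℓ : Fin K) :
    ∑ u : Fin N → Fin K, (∏ i, p (u i)) *
      ((if u i₀ = m then (1:ℝ) else 0) * (if u j₀ = ℓ then (1:ℝ) else 0))
      = p m * p ℓ := by
  set F : Fin N → Fin K → ℝ := fun i k =>
    if i = i₀ then (p k * if k = m then 1 else 0)
    else if i = j₀ then (p k * if k = ℓ then 1 else 0) else p k with hF
  have hsplit : ∀ u : Fin N → Fin K, (∏ i, p (u i)) *
      ((if u i₀ = m then (1:ℝ) else 0) * (if u j₀ = ℓ then (1:ℝ) else 0))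
      = ∏ i, F i (u i) := by
    intro u
    have e1 : (if u i₀ = m then (1:ℝ) else 0) = ∏ i, (if i = i₀ then (if u i = m then (1:ℝ) else 0) else 1) := by
      rw [Finset.prod_ite_eq' Finset.univ i₀ (fun i => (if u i = m then (1:ℝ) else 0))]
      simp
    have e2 : (if u j₀ = ℓ then (1:ℝ) else 0) = ∏ i, (if i = j₀ then (if u i = ℓ then (1:ℝ) else 0) else 1) := by
      rw [Finset.prod_ite_eq' Finset.univ j₀ (fun i => (if u i = ℓ then (1:ℝ) else 0))]
      simp
    rw [e1, e2, ← Finset.prod_mul_distrib, ← Finset.prod_mul_distrib]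
    apply Finset.prod_congr rfl
    intro i _
    rcases eq_or_ne i i₀ with rfl | h1
    · simp [hF, hij]
    · rcases eq_or_ne i j₀ with rfl | h2
      · simp [hF, h1]
      · simp [hF, h1, h2]
  have hfac : ∑ u : Fin N → Fin K, ∏ i, F i (u i) = ∏ i, ∑ k, F i k := by
    rw [Finset.prod_univ_sum]
    rw [Fintype.piFinset_univ]
  have hmul : ∀ (b : Fin K) (k : Fin K), (p k * if k = b then (1:ℝ) else 0) = if k = b then p k else 0 := by
    intro b k; split_ifs <;> simp
  have hcol : ∀ i, ∑ k, F i k = (if i = i₀ then p m else if i = j₀ then p ℓ else 1) := by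
    intro i
    rcases eq_or_ne i i₀ with rfl | h1
    · rw [if_pos rfl]
      have : ∀ k, F i k = if k = m then p k else 0 := by
        intro k; rw [hF]; simp only [if_pos rfl]; exact hmul m k
      rw [Finset.sum_congr rfl (fun k _ => this k), Finset.sum_ite_eq' Finset.univ m p]
      simp
    · rw [if_neg h1]
      rcases eq_or_ne i j₀ with rfl | h2
      · rw [if_pos rfl]
        have : ∀ k, F i k = if k = ℓ then p k else 0 := by
          intro k; rw [hF]; simp only [if_neg h1, if_pos rfl]; exact hmul ℓ k
        rw [Finset.sum_congr rfl (fun k _ => this k), Finset.sum_ite_eq' Finset.univ ℓ p]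
        simp
      · rw [if_neg h2]
        have : ∀ k, F i k = p k := by
          intro k; rw [hF]; simp only [if_neg h1, if_neg h2]
        rw [Finset.sum_congr rfl (fun k _ => this k), hp1]
  calc ∑ u : Fin N → Fin K, (∏ i, p (u i)) *
      ((if u i₀ = m then (1:ℝ) else 0) * (if u j₀ = ℓ then (1:ℝ) else 0))
      = ∑ u : Fin N → Fin K, ∏ i, F i (u i) := Finset.sum_congr rfl fun u _ => hsplit u
    _ = ∏ i, ∑ k, F i k := hfac
    _ = ∏ i, (if i = i₀ then p m else if i = j₀ then p ℓ else 1) :=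
        Finset.prod_congr rfl fun i _ => hcol i
    _ = p m * p ℓ := by
        have : ∀ i : Fin N, (if i = i₀ then p m else if i = j₀ then p ℓ else 1)
            = (if i = i₀ then p m else 1) * (if i = j₀ then p ℓ else 1) := by
          intro i
          rcases eq_or_ne i i₀ with rfl | h1
          · simp [hij]
          · rcases eq_or_ne i j₀ with rfl | h2
            · simp [h1]
            · simp [h1, h2]
        rw [Finset.prod_congr rfl (fun i _ => this i), Finset.prod_mul_distrib,
          Finset.prod_ite_eq' Finset.univ i₀ (fun _ => p m),
          Finset.prod_ite_eq' Finset.univ j₀ (fun _ => p ℓ)]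
        simp


lemma exchange_sums {N K dd : ℕ} (σ : Fin dd → Fin N → Fin N) (m ℓ : Fin K)
    (W : (Fin N → Fin K) → ℝ) :
    ∑ u : Fin N → Fin K, W u * Qfun N K dd σ m ℓ u
      = (1 / (N:ℝ)) * ∑ t : Fin dd, ∑ i : Fin N, ∑ u : Fin N → Fin K,
          W u * ((if u i = m then (1:ℝ) else 0) * (if u (σ t i) = ℓ then (1:ℝ) else 0)) := by
  have per_u : ∀ u : Fin N → Fin K, W u * Qfun N K dd σ m ℓ u
      = (1/(N:ℝ)) * ∑ t : Fin dd, ∑ i : Fin N,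
          W u * ((if u i = m then (1:ℝ) else 0) * (if u (σ t i) = ℓ then (1:ℝ) else 0)) := by
    intro u
    rw [Qfun, mul_left_comm]
    congr 1
    rw [Finset.mul_sum]
    refine Finset.sum_congr rfl fun t _ => ?_
    rw [Finset.mul_sum]
  calc ∑ u : Fin N → Fin K, W u * Qfun N K dd σ m ℓ u
      = ∑ u : Fin N → Fin K, (1/(N:ℝ)) * ∑ t : Fin dd, ∑ i : Fin N,
          W u * ((if u i = m then (1:ℝ) else 0) * (if u (σ t i) = ℓ then (1:ℝ) else 0)) :=
        Finset.sum_congr rfl fun u _ => per_u u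
    _ = (1/(N:ℝ)) * ∑ u : Fin N → Fin K, ∑ t : Fin dd, ∑ i : Fin N,
          W u * ((if u i = m then (1:ℝ) else 0) * (if u (σ t i) = ℓ then (1:ℝ) else 0)) :=
        (Finset.mul_sum _ _ _).symm
    _ = (1/(N:ℝ)) * ∑ t : Fin dd, ∑ u : Fin N → Fin K, ∑ i : Fin N,
          W u * ((if u i = m then (1:ℝ) else 0) * (if u (σ t i) = ℓ then (1:ℝ) else 0)) := by
        rw [Finset.sum_comm]
    _ = _ := by
        congr 1
        exact Finset.sum_congr rfl fun t _ => Finset.sum_comm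

lemma cube_mean {N K dd : ℕ} (σ : Fin dd → Fin N → Fin N) (m ℓ : Fin K)
    (hσ1 : ∀ t i, σ t i ≠ i) (hN : 0 < N) (p : Fin K → ℝ) (hp1 : ∑ k, p k = 1) :
    ∑ u : Fin N → Fin K, (∏ i, p (u i)) * Qfun N K dd σ m ℓ u
      = dd * (p m * p ℓ) := by
  rw [exchange_sums]
  have inner : ∀ (t : Fin dd) (i : Fin N),
      ∑ u : Fin N → Fin K, (∏ i', p (u i')) *
        ((if u i = m then (1:ℝ) else 0) * (if u (σ t i) = ℓ then (1:ℝ) else 0)) = p m * p ℓ :=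
    fun t i => cube_two_point p hp1 i (σ t i) (Ne.symm (hσ1 t i)) m ℓ
  rw [Finset.sum_congr rfl fun t _ => Finset.sum_congr rfl fun i _ => inner t _]
  rw [Finset.sum_const, Finset.sum_const, Finset.card_univ, Finset.card_univ,
    Fintype.card_fin, Fintype.card_fin, nsmul_eq_mul, nsmul_eq_mul]
  have hNne : (N:ℝ) ≠ 0 := by positivity
  field_simp

-- permutation side mean
lemma perm_pair_count {N K : ℕ} (w : Fin N → Fin K) (n : Fin K → ℕ)
    (hw : ∀ k, (Finset.univ.filter fun i => w i = k).card = n k) (m ℓ : Fin K)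
    (i₀ j₀ : Fin N) (hij : i₀ ≠ j₀) :
    ∑ e : Perm (Fin N), ((if w (e i₀) = m then (1:ℝ) else 0) * (if w (e j₀) = ℓ then (1:ℝ) else 0))
      = (Fintype.card (Perm (Fin N)) : ℝ) *
          (((n m : ℝ) * n ℓ - if m = ℓ then (n m : ℝ) else 0) / ((N:ℝ) * ((N:ℝ) - 1))) := by
  have hN2 : 1 < N := by
    have : Nontrivial (Fin N) := ⟨⟨i₀, j₀, hij⟩⟩
    simpa using Fintype.one_lt_card_iff_nontrivial.2 this
  have hN0 : (0:ℝ) < N := by positivity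
  have hN1 : (0:ℝ) < (N:ℝ) - 1 := by
    have : (1:ℝ) < N := by exact_mod_cast hN2
    linarith
  -- count of the m-fiber after a permutation
  have hA : ∀ (e : Perm (Fin N)) (k : Fin K),
      ∑ i : Fin N, (if w (e i) = k then (1:ℝ) else 0) = n k := by
    intro e k
    rw [Equiv.sum_comp e (fun i => if w i = k then (1:ℝ) else 0)]
    rw [Finset.sum_boole]
    rw [hw k]
  have hD : ∀ (e : Perm (Fin N)),
      ∑ i : Fin N, (if w (e i) = m then (1:ℝ) else 0) * (if w (e i) = ℓ then (1:ℝ) else 0)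
        = if m = ℓ then (n m : ℝ) else 0 := by
    intro e
    rcases eq_or_ne m ℓ with rfl | hml
    · rw [if_pos rfl, ← hA e m]
      refine Finset.sum_congr rfl fun i _ => ?_
      split_ifs <;> norm_num
    · rw [if_neg hml]
      apply Finset.sum_eq_zero
      intro i _
      split_ifs with h1 h2
      · exact absurd (h1.symm.trans h2) hml
      all_goals ring
  -- per-permutation pair sum
  have hP : ∀ (e : Perm (Fin N)),
      ∑ i : Fin N, ∑ j ∈ Finset.univ.erase i,
        ((if w (e i) = m then (1:ℝ) else 0) * (if w (e j) = ℓ then (1:ℝ) else 0))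
        = (n m : ℝ) * n ℓ - (if m = ℓ then (n m : ℝ) else 0) := by
    intro e
    have per_i : ∀ i : Fin N,
        ∑ j ∈ Finset.univ.erase i,
          ((if w (e i) = m then (1:ℝ) else 0) * (if w (e j) = ℓ then (1:ℝ) else 0))
        = (if w (e i) = m then (1:ℝ) else 0) * (n ℓ : ℝ)
            - (if w (e i) = m then (1:ℝ) else 0) * (if w (e i) = ℓ then (1:ℝ) else 0) := by
      intro i
      rw [← Finset.mul_sum, Finset.sum_erase_eq_sub (Finset.mem_univ i), hA e ℓ, mul_sub]
    rw [Finset.sum_congr rfl fun i _ => per_i i, Finset.sum_sub_distrib, ← Finset.sum_mul,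
      hA e m, hD e]
  -- invariance of the pair sum
  have hinv : ∀ (i j : Fin N), i ≠ j →
      ∑ e : Perm (Fin N), ((if w (e i) = m then (1:ℝ) else 0) * (if w (e j) = ℓ then (1:ℝ) else 0))
      = ∑ e : Perm (Fin N), ((if w (e i₀) = m then (1:ℝ) else 0) * (if w (e j₀) = ℓ then (1:ℝ) else 0)) := by
    intro i j hij'
    obtain ⟨ρ, hρ1, hρ2⟩ : ∃ ρ : Perm (Fin N), ρ i₀ = i ∧ ρ j₀ = j := by
      refine ⟨Equiv.swap (Equiv.swap i i₀ j₀) j * Equiv.swap i i₀, ?_, ?_⟩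
      · have hbne : Equiv.swap i i₀ j₀ ≠ i := by
          intro h
          have h2 : Equiv.swap i i₀ j₀ = Equiv.swap i i₀ i₀ := by
            rw [Equiv.swap_apply_right]; exact h
          exact hij ((Equiv.swap i i₀).injective h2).symm
        simp only [Perm.mul_apply, Equiv.swap_apply_right]
        exact Equiv.swap_apply_of_ne_of_ne (Ne.symm hbne) hij'
      · simp only [Perm.mul_apply, Equiv.swap_apply_left]
    calc ∑ e : Perm (Fin N), ((if w (e i) = m then (1:ℝ) else 0) * (if w (e j) = ℓ then (1:ℝ) else 0))
        = ∑ e : Perm (Fin N), ((if w ((e * ρ) i₀) = m then (1:ℝ) else 0) * (if w ((e * ρ) j₀) = ℓ then (1:ℝ) else 0)) := by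
          refine Finset.sum_congr rfl fun e _ => ?_
          rw [Perm.mul_apply, Perm.mul_apply, hρ1, hρ2]
      _ = _ := Equiv.sum_comp (Equiv.mulRight ρ)
            (fun e => ((if w (e i₀) = m then (1:ℝ) else 0) * (if w (e j₀) = ℓ then (1:ℝ) else 0)))
  -- double counting
  set T := ∑ e : Perm (Fin N), ((if w (e i₀) = m then (1:ℝ) else 0) * (if w (e j₀) = ℓ then (1:ℝ) else 0)) with hT
  have hcount : (N:ℝ) * ((N:ℝ) - 1) * T
      = (Fintype.card (Perm (Fin N)) : ℝ) * ((n m : ℝ) * n ℓ - (if m = ℓ then (n m : ℝ) else 0)) := by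
    have hB : ∑ i : Fin N, ∑ j ∈ Finset.univ.erase i,
        (∑ e : Perm (Fin N), ((if w (e i) = m then (1:ℝ) else 0) * (if w (e j) = ℓ then (1:ℝ) else 0)))
        = ∑ e : Perm (Fin N), ∑ i : Fin N, ∑ j ∈ Finset.univ.erase i,
            ((if w (e i) = m then (1:ℝ) else 0) * (if w (e j) = ℓ then (1:ℝ) else 0)) := by
      calc ∑ i : Fin N, ∑ j ∈ Finset.univ.erase i,
          (∑ e : Perm (Fin N), ((if w (e i) = m then (1:ℝ) else 0) * (if w (e j) = ℓ then (1:ℝ) else 0)))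
          = ∑ i : Fin N, ∑ e : Perm (Fin N), ∑ j ∈ Finset.univ.erase i,
            ((if w (e i) = m then (1:ℝ) else 0) * (if w (e j) = ℓ then (1:ℝ) else 0)) :=
          Finset.sum_congr rfl fun i _ => Finset.sum_comm
        _ = _ := Finset.sum_comm
    have hBA : ∑ i : Fin N, ∑ j ∈ Finset.univ.erase i,
        (∑ e : Perm (Fin N), ((if w (e i) = m then (1:ℝ) else 0) * (if w (e j) = ℓ then (1:ℝ) else 0)))
        = (N:ℝ) * ((N:ℝ) - 1) * T := by
      have per_ij : ∀ i : Fin N, ∀ j ∈ Finset.univ.erase i,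
          (∑ e : Perm (Fin N), ((if w (e i) = m then (1:ℝ) else 0) * (if w (e j) = ℓ then (1:ℝ) else 0))) = T := by
        intro i j hj
        exact hinv i j (Ne.symm (Finset.mem_erase.1 hj).1)
      rw [Finset.sum_congr rfl fun i _ => Finset.sum_congr rfl (per_ij i)]
      rw [Finset.sum_congr rfl fun i (_ : i ∈ Finset.univ) => Finset.sum_const (b := T)]
      rw [Finset.sum_congr rfl fun i (_ : i ∈ Finset.univ) => by
        rw [Finset.card_erase_of_mem (Finset.mem_univ i), Finset.card_univ, Fintype.card_fin]]
      rw [Finset.sum_const, Finset.card_univ, Fintype.card_fin]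
      rw [nsmul_eq_mul, nsmul_eq_mul, Nat.cast_sub (le_of_lt hN2)]
      push_cast
      ring
    rw [← hBA, hB]
    rw [Finset.sum_congr rfl fun e _ => hP e, Finset.sum_const, Finset.card_univ, nsmul_eq_mul]
  have hprod : (0:ℝ) < (N:ℝ) * ((N:ℝ) - 1) := by positivity
  rw [mul_div_assoc', eq_div_iff (ne_of_gt hprod)]
  linarith [hcount]


lemma exchange_sums_perm {N K dd : ℕ} (σ : Fin dd → Fin N → Fin N)
    (m ℓ : Fin K) (w : Fin N → Fin K) (c : ℝ) :
    ∑ e : Perm (Fin N), c * Qfun N K dd σ m ℓ (fun i => w (e i))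
      = (1 / (N:ℝ)) * ∑ t : Fin dd, ∑ i : Fin N, ∑ e : Perm (Fin N),
          c * ((if w (e i) = m then (1:ℝ) else 0) * (if w (e (σ t i)) = ℓ then (1:ℝ) else 0)) := by
  have per_x : ∀ e : Perm (Fin N), c * Qfun N K dd σ m ℓ (fun i => w (e i))
      = (1/(N:ℝ)) * ∑ t : Fin dd, ∑ i : Fin N,
          c * ((if w (e i) = m then (1:ℝ) else 0) * (if w (e (σ t i)) = ℓ then (1:ℝ) else 0)) := by
    intro e
    rw [Qfun, mul_left_comm]
    congr 1
    rw [Finset.mul_sum]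
    refine Finset.sum_congr rfl fun t _ => ?_
    rw [Finset.mul_sum]
  calc ∑ e : Perm (Fin N), c * Qfun N K dd σ m ℓ (fun i => w (e i))
      = ∑ e : Perm (Fin N), (1/(N:ℝ)) * ∑ t : Fin dd, ∑ i : Fin N,
          c * ((if w (e i) = m then (1:ℝ) else 0) * (if w (e (σ t i)) = ℓ then (1:ℝ) else 0)) :=
        Finset.sum_congr rfl fun e _ => per_x e
    _ = (1/(N:ℝ)) * ∑ e : Perm (Fin N), ∑ t : Fin dd, ∑ i : Fin N,
          c * ((if w (e i) = m then (1:ℝ) else 0) * (if w (e (σ t i)) = ℓ then (1:ℝ) else 0)) :=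
        (Finset.mul_sum _ _ _).symm
    _ = (1/(N:ℝ)) * ∑ t : Fin dd, ∑ e : Perm (Fin N), ∑ i : Fin N,
          c * ((if w (e i) = m then (1:ℝ) else 0) * (if w (e (σ t i)) = ℓ then (1:ℝ) else 0)) := by
        rw [Finset.sum_comm]
    _ = _ := by
        congr 1
        exact Finset.sum_congr rfl fun t _ => Finset.sum_comm

lemma perm_mean {N K dd : ℕ} (σ : Fin dd → Fin N → Fin N) (m ℓ : Fin K)
    (hσ1 : ∀ t i, σ t i ≠ i) (w : Fin N → Fin K) (n : Fin K → ℕ)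
    (hw : ∀ k, (Finset.univ.filter fun i => w i = k).card = n k) (hN : 0 < N) :
    ∑ e : Perm (Fin N), ((Fintype.card (Perm (Fin N)) : ℝ))⁻¹ * Qfun N K dd σ m ℓ (fun i => w (e i))
      = dd * (((n m : ℝ) * n ℓ - if m = ℓ then (n m : ℝ) else 0) / ((N:ℝ) * ((N:ℝ) - 1))) := by
  rw [exchange_sums_perm σ m ℓ w ((Fintype.card (Perm (Fin N)) : ℝ))⁻¹]
  have hcpos : (0:ℝ) < (Fintype.card (Perm (Fin N)) : ℝ) := by exact_mod_cast Fintype.card_pos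
  have inner : ∀ (t : Fin dd) (i : Fin N),
      ∑ e : Perm (Fin N), ((Fintype.card (Perm (Fin N)) : ℝ))⁻¹ *
        ((if w (e i) = m then (1:ℝ) else 0) * (if w (e (σ t i)) = ℓ then (1:ℝ) else 0))
      = ((n m : ℝ) * n ℓ - if m = ℓ then (n m : ℝ) else 0) / ((N:ℝ) * ((N:ℝ) - 1)) := by
    intro t i
    rw [← Finset.mul_sum, perm_pair_count w n hw m ℓ i (σ t i) (Ne.symm (hσ1 t i))]
    rw [← mul_assoc, inv_mul_cancel₀ (ne_of_gt hcpos), one_mul]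
  rw [Finset.sum_congr rfl fun t _ => Finset.sum_congr rfl fun i _ => inner t i]
  rw [Finset.sum_const, Finset.sum_const, Finset.card_univ, Finset.card_univ,
    Fintype.card_fin, Fintype.card_fin, nsmul_eq_mul, nsmul_eq_mul]
  have hNne : (N:ℝ) ≠ 0 := by positivity
  set R := ((n m : ℝ) * n ℓ - if m = ℓ then (n m : ℝ) else 0) / ((N:ℝ) * ((N:ℝ) - 1)) with hR
  field_simp

lemma mean_comparison {N : ℕ} (a b δ : ℝ) (dd : ℕ) (hN2 : 1 < N)
    (ha0 : 0 ≤ a) (haN : a ≤ N) (hb0 : 0 ≤ b) (hbN : b ≤ N) (hδ0 : 0 ≤ δ) (hδN : δ ≤ N) :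
    |(dd : ℝ) * ((a * b - δ) / ((N:ℝ) * ((N:ℝ) - 1))) - dd * ((a/N) * (b/N))|
      ≤ 2 * dd / ((N:ℝ) - 1) := by
  have hD1 : (0:ℝ) < (N:ℝ) - 1 := by
    have : (1:ℝ) < N := by exact_mod_cast hN2
    linarith
  have hD0 : (0:ℝ) < N := by positivity
  have hE : (dd:ℝ) * ((a * b - δ) / ((N:ℝ) * ((N:ℝ) - 1))) - dd * ((a/N) * (b/N))
      = (dd:ℝ) * ((a*b - δ*N) / ((N:ℝ)^2 * ((N:ℝ) - 1))) := by
    field_simp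
    ring
  rw [hE, abs_mul, abs_div, Nat.abs_cast]
  have hnum : |a*b - δ*(N:ℝ)| ≤ (N:ℝ)^2 := by
    rw [abs_le]
    constructor <;> nlinarith
  have hden : |(N:ℝ)^2 * ((N:ℝ)-1)| = (N:ℝ)^2 * ((N:ℝ)-1) := abs_of_pos (by positivity)
  rw [hden]
  calc (dd:ℝ) * (|a*b - δ*(N:ℝ)| / ((N:ℝ)^2 * ((N:ℝ)-1)))
      ≤ (dd:ℝ) * ((N:ℝ)^2 / ((N:ℝ)^2 * ((N:ℝ)-1))) := by
        gcongr
      _ ≤ 2 * dd / ((N:ℝ) - 1) := by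
        rw [show (N:ℝ)^2 / ((N:ℝ)^2*((N:ℝ)-1)) = 1/((N:ℝ)-1) by field_simp]
        rw [mul_one_div, div_le_div_iff₀ hD1 hD1]
        nlinarith [Nat.cast_nonneg (α := ℝ) dd]


lemma perm_event_measure {N K : ℕ} {Ω : Type} [MeasurableSpace Ω] (μ : Measure Ω)
    (π : Ω → Perm (Fin N)) (V : Ω → Fin N → Fin K) (w : Fin N → Fin K)
    (hmeas : ∀ e : Perm (Fin N), MeasurableSet {ω | π ω = e})
    (hunif : ∀ e : Perm (Fin N), μ {ω | π ω = e} = ((Fintype.card (Perm (Fin N)) : ℝ≥0∞))⁻¹)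
    (hV : ∀ ω i, V ω i = w (π ω i))
    (A : (Fin N → Fin K) → Prop) [DecidablePred A] :
    μ {ω | A (V ω)}
      = ((Finset.univ.filter (fun e : Perm (Fin N) => A (fun i => w (e i)))).card : ℝ≥0∞)
          * ((Fintype.card (Perm (Fin N)) : ℝ≥0∞))⁻¹ := by
  set T := Finset.univ.filter (fun e : Perm (Fin N) => A (fun i => w (e i))) with hT
  have hset : {ω | A (V ω)} = ⋃ e ∈ T, {ω | π ω = e} := by
    ext ω
    simp only [Set.mem_setOf_eq, Set.mem_iUnion, hT, Finset.mem_filter, Finset.mem_univ,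
      true_and, exists_prop]
    constructor
    · intro h
      refine ⟨π ω, ?_, rfl⟩
      have : V ω = fun i => w (π ω i) := funext (hV ω)
      rwa [this] at h
    · rintro ⟨e, he, hpe⟩
      have : V ω = fun i => w (e i) := by
        funext i; rw [hV ω i, hpe]
      rwa [this]
  rw [hset, measure_biUnion_finset ?_ (fun e _ => hmeas e)]
  · rw [Finset.sum_congr rfl fun e _ => hunif e, Finset.sum_const, nsmul_eq_mul]
  · intro e _ e' _ hee
    simp only [Function.onFun]
    apply Set.disjoint_left.2
    intro ω h1 h2
    exact hee (h1.symm.trans h2)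

lemma cube_event_measure {N K : ℕ} {Ω : Type} [MeasurableSpace Ω] (μ : Measure Ω)
    [IsProbabilityMeasure μ]
    (W : Fin N → Ω → Fin K) (n : Fin K → ℕ)
    (hW : ∀ i, Measurable (W i))
    (hiid : iIndepFun W μ)
    (hmarg : ∀ i k, μ {ω | W i ω = k} = (n k : ℝ≥0∞) / (N : ℝ≥0∞))
    (B : (Fin N → Fin K) → Prop) [DecidablePred B] :
    μ {ω | B (fun i => W i ω)}
      = ∑ u ∈ Finset.univ.filter B, ∏ i, ((n (u i) : ℝ≥0∞) / (N : ℝ≥0∞)) := by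
  set T := Finset.univ.filter B with hT
  have hset : {ω | B (fun i => W i ω)} = ⋃ u ∈ T, ⋂ i ∈ (Finset.univ : Finset (Fin N)), W i ⁻¹' {u i} := by
    ext ω
    simp only [Set.mem_setOf_eq, Set.mem_iUnion, Set.mem_iInter, Set.mem_preimage,
      Set.mem_singleton_iff, hT, Finset.mem_filter, Finset.mem_univ, true_and, exists_prop]
    constructor
    · intro h
      exact ⟨fun i => W i ω, h, fun i _ => rfl⟩
    · rintro ⟨u, hu, hcell⟩
      have : (fun i => W i ω) = u := funext fun i => by simpa using hcell i
      rwa [this]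
  rw [hset, measure_biUnion_finset ?_ ?_]
  · refine Finset.sum_congr rfl fun u _ => ?_
    rw [hiid.measure_inter_preimage_eq_mul Finset.univ (sets := fun i => {u i})
      (fun i _ => MeasurableSet.singleton _)]
    refine Finset.prod_congr rfl fun i _ => ?_
    rw [show W i ⁻¹' {u i} = {ω | W i ω = u i} from rfl, hmarg i (u i)]
  · intro u _ u' _ huu
    simp only [Function.onFun]
    apply Set.disjoint_left.2
    intro ω h1 h2
    simp only [Set.mem_iInter, Set.mem_preimage, Set.mem_singleton_iff] at h1 h2
    exact huu (funext fun i => (h1 i (Finset.mem_univ i)).symm.trans (h2 i (Finset.mem_univ i)))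
  · intro u _
    exact Finset.measurableSet_biInter _ fun i _ => (hW i) (MeasurableSet.singleton _)

set_option maxHeartbeats 2000000 in
/-- Theorem 4.2 of the paper: for every `ε > 0` there are constants
`C, c > 0`, depending only on `ε` and the degree `d`, such that for any `N`,
`K`, count vector `n` summing to `N`, arrangement `w` with fibers of sizes `n`,
fixed-point-free involutions `σ 1, …, σ d` of `Fin N` (perfect matchings), and
any coupling on a common probability space of `V = w ∘ π` (with `π` a uniform
random permutation of `Fin N`) and `W` with i.i.d. coordinates of law `n/N`,
the quadratic interaction counts
`Q_{m,ℓ}(u) = (1/N) ∑ t, ∑ i, 1{u i = m} 1{u (σ t i) = ℓ}` satisfy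
`P(|Q_{m,ℓ}(V) − Q_{m,ℓ}(W)| > ε) ≤ C exp (−c N)` for all `m, ℓ`. -/
theorem coupled_quadratic_counts_close
    (d : ℕ) (hd : 0 < d) (ε : ℝ) (hε : 0 < ε) :
    ∃ C > (0 : ℝ), ∃ c > (0 : ℝ),
      ∀ (N K : ℕ), 0 < N → 0 < K →
      ∀ (σ : Fin d → Fin N → Fin N),
        (∀ t i, σ t (σ t i) = i) → (∀ t i, σ t i ≠ i) →
      ∀ (n : Fin K → ℕ), (∑ k, n k) = N →
      ∀ (w : Fin N → Fin K),
        (∀ k, (Finset.univ.filter fun i => w i = k).card = n k) →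
      ∀ (Ω : Type) (_ : MeasurableSpace Ω) (μ : Measure Ω),
        IsProbabilityMeasure μ →
      ∀ (π : Ω → Equiv.Perm (Fin N)) (V : Ω → Fin N → Fin K)
        (W : Fin N → Ω → Fin K),
        (∀ e : Equiv.Perm (Fin N), MeasurableSet {ω | π ω = e}) →
        (∀ i, Measurable (W i)) →
        -- `π` is a uniformly distributed random permutation:
        (∀ e : Equiv.Perm (Fin N),
          μ {ω | π ω = e} = ((Fintype.card (Equiv.Perm (Fin N)) : ℝ≥0∞))⁻¹) →
        -- `V` is distributed as `w ∘ π`: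
        (∀ ω i, V ω i = w (π ω i)) →
        -- the coordinates of `W` are i.i.d. with law `n/N`:
        iIndepFun W μ →
        (∀ i k, μ {ω | W i ω = k} = (n k : ℝ≥0∞) / (N : ℝ≥0∞)) →
      ∀ m ℓ : Fin K,
        μ {ω | ε <
            |((1 / (N : ℝ)) * ∑ t : Fin d, ∑ i : Fin N,
                (if V ω i = m then (1 : ℝ) else 0) *
                  (if V ω (σ t i) = ℓ then (1 : ℝ) else 0)) -
              (1 / (N : ℝ)) * ∑ t : Fin d, ∑ i : Fin N,
                (if W i ω = m then (1 : ℝ) else 0) *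
                  (if W (σ t i) ω = ℓ then (1 : ℝ) else 0)|} ≤
          ENNReal.ofReal (C * Real.exp (-c * N)) := by
  classical
  have hd' : (0:ℝ) < d := by exact_mod_cast hd
  set ε₀ : ℝ := min ε (64 * d) with hε₀def
  have hε₀pos : 0 < ε₀ := lt_min hε (by positivity)
  have hε₀le : ε₀ ≤ ε := min_le_left _ _
  have hε₀le64 : ε₀ ≤ 64 * d := min_le_right _ _
  set c : ℝ := ε₀^2 / (4096 * (d:ℝ)^2) with hcdef
  have hc : 0 < c := by positivity
  set N₀ : ℕ := ⌈(4 * (d:ℝ)) / ε⌉₊ + 2 with hN₀def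
  set C : ℝ := 4 * Real.exp (c * N₀) with hCdef
  have hC : 0 < C := by positivity
  refine ⟨C, hC, c, hc, ?_⟩
  intro N K hN hK σ hσ2 hσ1 n hn w hw Ω inst μ hμ π V W hmeasπ hmeasW hunif hV hiid hmarg m ℓ
  haveI := hμ
  have hEq : {ω | ε <
      |((1 / (N : ℝ)) * ∑ t : Fin d, ∑ i : Fin N,
          (if V ω i = m then (1 : ℝ) else 0) *
            (if V ω (σ t i) = ℓ then (1 : ℝ) else 0)) -
        (1 / (N : ℝ)) * ∑ t : Fin d, ∑ i : Fin N,
          (if W i ω = m then (1 : ℝ) else 0) *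
            (if W (σ t i) ω = ℓ then (1 : ℝ) else 0)|}
      = {ω | ε < |Qfun N K d σ m ℓ (V ω) - Qfun N K d σ m ℓ (fun i => W i ω)|} := rfl
  rw [hEq]
  by_cases hNN : N < N₀
  · -- small N: trivial bound
    calc μ _ ≤ 1 := prob_le_one
      _ ≤ ENNReal.ofReal (C * Real.exp (-c * N)) := by
          rw [← ENNReal.ofReal_one]
          apply ENNReal.ofReal_le_ofReal
          have h1 : C * Real.exp (-c * N) = 4 * Real.exp (c * N₀ + (-c * N)) := by
            rw [hCdef, Real.exp_add]; ring
          rw [h1]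
          have h2 : (0:ℝ) ≤ c * N₀ + (-c * N) := by
            have : (N:ℝ) ≤ N₀ := by exact_mod_cast le_of_lt hNN
            nlinarith
          nlinarith [Real.one_le_exp h2]
  · push_neg at hNN  -- N₀ ≤ N
    have hN02 : 2 ≤ N₀ := by rw [hN₀def]; omega
    have hN2 : 1 < N := lt_of_lt_of_le (by omega) hNN
    have hN0r : (0:ℝ) < N := by exact_mod_cast hN
    have hN1r : (0:ℝ) < (N:ℝ) - 1 := by
      have : (1:ℝ) < N := by exact_mod_cast hN2
      linarith
    have hcardP : (0:ℝ) < (Fintype.card (Perm (Fin N)) : ℝ) := by exact_mod_cast Fintype.card_pos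
    have hp0 : ∀ k : Fin K, 0 ≤ (n k : ℝ)/(N:ℝ) := fun k => by positivity
    have hp1 : ∑ k : Fin K, (n k : ℝ)/(N:ℝ) = 1 := by
      rw [← Finset.sum_div]
      have hcast : ∑ k : Fin K, (n k:ℝ) = (N:ℝ) := by exact_mod_cast hn
      rw [hcast, div_self (ne_of_gt hN0r)]
    -- abbreviations
    set R : ℝ := ((n m : ℝ) * (n ℓ : ℝ) - if m = ℓ then (n m : ℝ) else 0) / ((N:ℝ) * ((N:ℝ) - 1)) with hRdef
    set R' : ℝ := ((n m : ℝ)/(N:ℝ)) * ((n ℓ : ℝ)/(N:ℝ)) with hR'def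
    set lam : ℝ := ε₀ * (N:ℝ) / (512 * (d:ℝ)^2) with hlamdef
    have hlam0 : 0 ≤ lam := by rw [hlamdef]; positivity
    have hlc_cube : lam * (2*(d:ℝ)/(N:ℝ)) ≤ 1 := by
      have he : ε₀ * (N:ℝ) / (512 * (d:ℝ)^2) * (2*(d:ℝ)/(N:ℝ)) = ε₀/(256*(d:ℝ)) := by
        field_simp; ring
      rw [hlamdef, he, div_le_one (by positivity)]
      linarith only [hε₀le64, hd']
    have hlc_perm : lam * (2 * (2*(2*(d:ℝ)/(N:ℝ)))) ≤ 1 := by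
      have he : ε₀ * (N:ℝ) / (512 * (d:ℝ)^2) * (2 * (2*(2*(d:ℝ)/(N:ℝ)))) = ε₀/(64*(d:ℝ)) := by
        field_simp; ring
      rw [hlamdef, he, div_le_one (by positivity)]
      linarith only [hε₀le64, hd']
    -- means
    have hfbarV : (∑ e : Perm (Fin N), ((Fintype.card (Perm (Fin N)) : ℝ))⁻¹
        * Qfun N K d σ m ℓ (fun i => w (e i))) = (d:ℝ) * R :=
      perm_mean σ m ℓ hσ1 w n hw hN
    have hfbarW : (∑ u : Fin N → Fin K, (∏ i, (n (u i) : ℝ)/(N:ℝ)) * Qfun N K d σ m ℓ u)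
        = (d:ℝ) * R' := cube_mean σ m ℓ hσ1 hN (fun k => (n k : ℝ)/(N:ℝ)) hp1
    have hnm : n m ≤ N := hn ▸ Finset.single_le_sum (f := fun k => n k) (fun k _ => Nat.zero_le _) (Finset.mem_univ m)
    have hnl : n ℓ ≤ N := hn ▸ Finset.single_le_sum (f := fun k => n k) (fun k _ => Nat.zero_le _) (Finset.mem_univ ℓ)
    have hmean_close : |(d:ℝ) * R - (d:ℝ) * R'| ≤ ε/2 := by
      have h1 := mean_comparison (N := N) (n m : ℝ) (n ℓ : ℝ) (if m = ℓ then (n m : ℝ) else 0) d hN2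
        (Nat.cast_nonneg _) (by exact_mod_cast hnm) (Nat.cast_nonneg _) (by exact_mod_cast hnl)
        (by split_ifs; exacts [Nat.cast_nonneg _, le_refl 0])
        (by split_ifs; exacts [by exact_mod_cast hnm, by positivity])
      rw [← hRdef, ← hR'def] at h1
      refine le_trans h1 ?_
      -- 2d/(N-1) ≤ ε/2  since N - 1 ≥ 4d/ε
      have hceil : (4*(d:ℝ))/ε ≤ (⌈(4 * (d:ℝ)) / ε⌉₊ : ℝ) := Nat.le_ceil _
      have hNN' : (N₀:ℝ) ≤ (N:ℝ) := by exact_mod_cast hNN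
      have hN₀r : (N₀:ℝ) = (⌈(4 * (d:ℝ)) / ε⌉₊ : ℝ) + 2 := by rw [hN₀def]; push_cast; ring
      have hge : (4*(d:ℝ))/ε ≤ (N:ℝ) - 1 := by
        rw [hN₀r] at hNN'
        linarith only [hceil, hNN']
      have h4 : (0:ℝ) < (4*(d:ℝ))/ε := by positivity
      calc 2 * (d:ℝ) / ((N:ℝ) - 1) ≤ 2 * (d:ℝ) / ((4*(d:ℝ))/ε) := by gcongr
        _ = ε/2 := by field_simp; ring
    -- MGF bounds
    have hmgfV := perm_mgf N (fun e => Qfun N K d σ m ℓ (fun i => w (e i)))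
      (2*(2*(d:ℝ)/(N:ℝ))) lam (fun e a b => Qfun_lip_swap σ m ℓ hσ2 w e a b) hlam0 hlc_perm
    have hmgfVneg := perm_mgf N (fun e => -Qfun N K d σ m ℓ (fun i => w (e i)))
      (2*(2*(d:ℝ)/(N:ℝ))) lam
      (fun e a b => by
        show |(-Qfun N K d σ m ℓ fun i => w ((Equiv.swap a b * e) i))
          - -Qfun N K d σ m ℓ fun i => w (e i)| ≤ _
        rw [show (-Qfun N K d σ m ℓ fun i => w ((Equiv.swap a b * e) i))
            - -Qfun N K d σ m ℓ (fun i => w (e i))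
            = -((Qfun N K d σ m ℓ fun i => w ((Equiv.swap a b * e) i))
              - Qfun N K d σ m ℓ (fun i => w (e i))) from by ring, abs_neg]
        exact Qfun_lip_swap σ m ℓ hσ2 w e a b)
      hlam0 hlc_perm
    have hmgfW := cube_mgf N (fun k => (n k : ℝ)/(N:ℝ)) hp0 hp1 (Qfun N K d σ m ℓ)
      (2*(d:ℝ)/(N:ℝ)) lam (fun u i x => Qfun_lip_update σ m ℓ hσ2 u i x) hlam0 hlc_cube hK
    have hmgfWneg := cube_mgf N (fun k => (n k : ℝ)/(N:ℝ)) hp0 hp1 (fun u => -Qfun N K d σ m ℓ u)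
      (2*(d:ℝ)/(N:ℝ)) lam
      (fun u i x => by
        show |(-Qfun N K d σ m ℓ (Function.update u i x)) - -Qfun N K d σ m ℓ u| ≤ _
        rw [show (-Qfun N K d σ m ℓ (Function.update u i x)) - -Qfun N K d σ m ℓ u
            = -(Qfun N K d σ m ℓ (Function.update u i x) - Qfun N K d σ m ℓ u) from by ring,
          abs_neg]
        exact Qfun_lip_update σ m ℓ hσ2 u i x)
      hlam0 hlc_cube hK
    rw [hfbarV] at hmgfV
    rw [hfbarW] at hmgfW
    have hnegmeanV : (∑ e : Perm (Fin N), ((Fintype.card (Perm (Fin N)) : ℝ))⁻¹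
        * (-Qfun N K d σ m ℓ (fun i => w (e i))))
        = -((d:ℝ) * R) := by
      rw [← hfbarV]
      simp [mul_neg, Finset.sum_neg_distrib]
    have hnegmeanW : (∑ u : Fin N → Fin K, (∏ i, (n (u i) : ℝ)/(N:ℝ)) * (-Qfun N K d σ m ℓ u))
        = -((d:ℝ) * R') := by
      rw [← hfbarW]
      simp [mul_neg, Finset.sum_neg_distrib]
    rw [hnegmeanV] at hmgfVneg
    rw [hnegmeanW] at hmgfWneg
    -- tail sets
    set A1 : (Fin N → Fin K) → Prop := fun u => (d:ℝ) * R + ε/4 < Qfun N K d σ m ℓ u with hA1def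
    set A2 : (Fin N → Fin K) → Prop := fun u => -((d:ℝ) * R) + ε/4 < -Qfun N K d σ m ℓ u with hA2def
    set B1 : (Fin N → Fin K) → Prop := fun u => (d:ℝ) * R' + ε/4 < Qfun N K d σ m ℓ u with hB1def
    set B2 : (Fin N → Fin K) → Prop := fun u => -((d:ℝ) * R') + ε/4 < -Qfun N K d σ m ℓ u with hB2def
    set S1 : Finset (Perm (Fin N)) := Finset.univ.filter (fun e => A1 (fun i => w (e i))) with hS1def
    set S2 : Finset (Perm (Fin N)) := Finset.univ.filter (fun e => A2 (fun i => w (e i))) with hS2def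
    set T1 : Finset (Fin N → Fin K) := Finset.univ.filter B1 with hT1def
    set T2 : Finset (Fin N → Fin K) := Finset.univ.filter B2 with hT2def
    have hρP : ∀ _e : Perm (Fin N), (0:ℝ) ≤ ((Fintype.card (Perm (Fin N)) : ℝ))⁻¹ :=
      fun _ => inv_nonneg.mpr (le_of_lt hcardP)
    have hρW : ∀ u : Fin N → Fin K, (0:ℝ) ≤ ∏ i, (n (u i) : ℝ)/(N:ℝ) :=
      fun u => Finset.prod_nonneg fun i _ => hp0 _
    have htail1 : ∑ e ∈ S1, ((Fintype.card (Perm (Fin N)) : ℝ))⁻¹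
        ≤ Real.exp (4 * lam^2 * (2*(2*(d:ℝ)/(N:ℝ)))^2 * (N:ℝ) - lam * (ε/4)) :=
      weighted_tail _ _ ((d:ℝ) * R) (ε/4) lam _ hρP hlam0 hmgfV S1
        (fun e he => by
          have := (Finset.mem_filter.1 (hS1def ▸ he)).2
          rw [hA1def] at this
          exact this)
    have htail2 : ∑ e ∈ S2, ((Fintype.card (Perm (Fin N)) : ℝ))⁻¹
        ≤ Real.exp (4 * lam^2 * (2*(2*(d:ℝ)/(N:ℝ)))^2 * (N:ℝ) - lam * (ε/4)) :=
      weighted_tail _ _ (-((d:ℝ) * R)) (ε/4) lam _ hρP hlam0 hmgfVneg S2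
        (fun e he => by
          have := (Finset.mem_filter.1 (hS2def ▸ he)).2
          rw [hA2def] at this
          exact this)
    have htail3 : ∑ u ∈ T1, ∏ i, (n (u i) : ℝ)/(N:ℝ)
        ≤ Real.exp (lam^2 * (2*(d:ℝ)/(N:ℝ))^2 * (N:ℝ) - lam * (ε/4)) :=
      weighted_tail _ _ ((d:ℝ) * R') (ε/4) lam _ hρW hlam0 hmgfW T1
        (fun u hu => by
          have := (Finset.mem_filter.1 (hT1def ▸ hu)).2
          rw [hB1def] at this
          exact this)
    have htail4 : ∑ u ∈ T2, ∏ i, (n (u i) : ℝ)/(N:ℝ)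
        ≤ Real.exp (lam^2 * (2*(d:ℝ)/(N:ℝ))^2 * (N:ℝ) - lam * (ε/4)) :=
      weighted_tail _ _ (-((d:ℝ) * R')) (ε/4) lam _ hρW hlam0 hmgfWneg T2
        (fun u hu => by
          have := (Finset.mem_filter.1 (hT2def ▸ hu)).2
          rw [hB2def] at this
          exact this)
    -- numeric exponent bounds
    have hMVeq : 4 * lam^2 * (2*(2*(d:ℝ)/(N:ℝ)))^2 * (N:ℝ) = c * N := by
      rw [hlamdef, hcdef]
      field_simp
      ring
    have hMWeq : lam^2 * (2*(d:ℝ)/(N:ℝ))^2 * (N:ℝ) = c * N / 16 := by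
      rw [hlamdef, hcdef]
      field_simp
      ring
    have hlt : 2 * (c * N) ≤ lam * (ε/4) := by
      have hdiffeq : lam * (ε/4) - 2 * (c * (N:ℝ)) = (ε - ε₀) * ε₀ * (N:ℝ) / (2048 * (d:ℝ)^2) := by
        rw [hlamdef, hcdef]
        ring
      have hpos : 0 ≤ (ε - ε₀) * ε₀ * (N:ℝ) / (2048 * (d:ℝ)^2) := by
        apply div_nonneg _ (by positivity)
        have : 0 ≤ ε - ε₀ := by linarith
        positivity
      rw [← hdiffeq] at hpos
      linarith only [hpos]
    have hcN0 : 0 ≤ c * (N:ℝ) := mul_nonneg (le_of_lt hc) (le_of_lt hN0r)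
    have hexpV : 4 * lam^2 * (2*(2*(d:ℝ)/(N:ℝ)))^2 * (N:ℝ) - lam * (ε/4) ≤ -c * N := by
      rw [hMVeq]; linarith only [hlt, hcN0]
    have hexpW : lam^2 * (2*(d:ℝ)/(N:ℝ))^2 * (N:ℝ) - lam * (ε/4) ≤ -c * N := by
      rw [hMWeq]; linarith only [hlt, hcN0]
    -- measures of the four events
    have hE1 := perm_event_measure μ π V w hmeasπ hunif hV A1
    have hE2 := perm_event_measure μ π V w hmeasπ hunif hV A2
    have hE3 := cube_event_measure μ W n hmeasW hiid hmarg B1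
    have hE4 := cube_event_measure μ W n hmeasW hiid hmarg B2
    have hVbound : ∀ (A : (Fin N → Fin K) → Prop) [DecidablePred A]
        (S : Finset (Perm (Fin N))),
        S = Finset.univ.filter (fun e => A (fun i => w (e i))) →
        (∑ e ∈ S, ((Fintype.card (Perm (Fin N)) : ℝ))⁻¹
          ≤ Real.exp (4 * lam^2 * (2*(2*(d:ℝ)/(N:ℝ)))^2 * (N:ℝ) - lam * (ε/4))) →
        μ {ω | A (V ω)} ≤ ENNReal.ofReal (Real.exp (-c * N)) := by
      intro A _ S hSd htail
      rw [perm_event_measure μ π V w hmeasπ hunif hV A]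
      have hsum : ∑ e ∈ S, ((Fintype.card (Perm (Fin N)) : ℝ))⁻¹
          = (S.card : ℝ) * ((Fintype.card (Perm (Fin N)) : ℝ))⁻¹ := by
        rw [Finset.sum_const, nsmul_eq_mul]
      have hcount : ((Finset.univ.filter (fun e : Perm (Fin N) => A (fun i => w (e i)))).card : ℝ)
          * ((Fintype.card (Perm (Fin N)) : ℝ))⁻¹ ≤ Real.exp (-c * N) := by
        rw [← hSd, ← hsum]
        exact le_trans htail (Real.exp_le_exp.2 hexpV)
      calc ((Finset.univ.filter (fun e : Perm (Fin N) => A (fun i => w (e i)))).card : ℝ≥0∞)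
            * ((Fintype.card (Perm (Fin N)) : ℝ≥0∞))⁻¹
          = ENNReal.ofReal (((Finset.univ.filter (fun e : Perm (Fin N) => A (fun i => w (e i)))).card : ℝ)
              * ((Fintype.card (Perm (Fin N)) : ℝ))⁻¹) := by
            rw [ENNReal.ofReal_mul (Nat.cast_nonneg _), ENNReal.ofReal_natCast,
              ENNReal.ofReal_inv_of_pos hcardP, ENNReal.ofReal_natCast]
        _ ≤ ENNReal.ofReal (Real.exp (-c * N)) := ENNReal.ofReal_le_ofReal hcount
    have hWbound : ∀ (B : (Fin N → Fin K) → Prop) [DecidablePred B]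
        (T : Finset (Fin N → Fin K)),
        T = Finset.univ.filter B →
        (∑ u ∈ T, ∏ i, (n (u i) : ℝ)/(N:ℝ)
          ≤ Real.exp (lam^2 * (2*(d:ℝ)/(N:ℝ))^2 * (N:ℝ) - lam * (ε/4))) →
        μ {ω | B (fun i => W i ω)} ≤ ENNReal.ofReal (Real.exp (-c * N)) := by
      intro B _ T hTd htail
      rw [cube_event_measure μ W n hmeasW hiid hmarg B]
      have hconv : ∑ u ∈ Finset.univ.filter B, ∏ i, ((n (u i) : ℝ≥0∞) / (N : ℝ≥0∞))
          = ENNReal.ofReal (∑ u ∈ Finset.univ.filter B, ∏ i, (n (u i) : ℝ)/(N:ℝ)) := by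
        rw [ENNReal.ofReal_sum_of_nonneg (fun u _ => hρW u)]
        refine Finset.sum_congr rfl fun u _ => ?_
        rw [ENNReal.ofReal_prod_of_nonneg (fun i _ => hp0 _)]
        refine Finset.prod_congr rfl fun i _ => ?_
        rw [ENNReal.ofReal_div_of_pos hN0r, ENNReal.ofReal_natCast, ENNReal.ofReal_natCast]
      rw [hconv]
      apply ENNReal.ofReal_le_ofReal
      rw [← hTd]
      exact le_trans htail (Real.exp_le_exp.2 hexpW)
    have hb1 := hVbound A1 S1 hS1def htail1
    have hb2 := hVbound A2 S2 hS2def htail2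
    have hb3 := hWbound B1 T1 hT1def htail3
    have hb4 := hWbound B2 T2 hT2def htail4
    -- inclusion
    have hsub : {ω | ε < |Qfun N K d σ m ℓ (V ω) - Qfun N K d σ m ℓ (fun i => W i ω)|}
        ⊆ (({ω | A1 (V ω)} ∪ {ω | A2 (V ω)}) ∪
            ({ω | B1 (fun i => W i ω)} ∪ {ω | B2 (fun i => W i ω)})) := by
      intro ω hω
      simp only [Set.mem_setOf_eq] at hω
      by_contra hcon
      simp only [Set.mem_union, Set.mem_setOf_eq, not_or] at hcon
      obtain ⟨⟨h1, h2⟩, h3, h4⟩ := hcon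
      rw [hA1def] at h1
      rw [hA2def] at h2
      rw [hB1def] at h3
      rw [hB2def] at h4
      simp only [not_lt] at h1 h2 h3 h4
      have habs := abs_le.1 hmean_close
      rcases lt_abs.1 hω with hcase | hcase <;>
        linarith only [h1, h2, h3, h4, habs.1, habs.2, hcase]
    -- final chain
    calc μ {ω | ε < |Qfun N K d σ m ℓ (V ω) - Qfun N K d σ m ℓ (fun i => W i ω)|}
        ≤ μ (({ω | A1 (V ω)} ∪ {ω | A2 (V ω)}) ∪
            ({ω | B1 (fun i => W i ω)} ∪ {ω | B2 (fun i => W i ω)})) := measure_mono hsub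
      _ ≤ μ ({ω | A1 (V ω)} ∪ {ω | A2 (V ω)})
            + μ ({ω | B1 (fun i => W i ω)} ∪ {ω | B2 (fun i => W i ω)}) := measure_union_le _ _
      _ ≤ (μ {ω | A1 (V ω)} + μ {ω | A2 (V ω)})
            + (μ {ω | B1 (fun i => W i ω)} + μ {ω | B2 (fun i => W i ω)}) :=
          add_le_add (measure_union_le _ _) (measure_union_le _ _)
      _ ≤ (ENNReal.ofReal (Real.exp (-c * N)) + ENNReal.ofReal (Real.exp (-c * N)))
            + (ENNReal.ofReal (Real.exp (-c * N)) + ENNReal.ofReal (Real.exp (-c * N))) :=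
          add_le_add (add_le_add hb1 hb2) (add_le_add hb3 hb4)
      _ ≤ ENNReal.ofReal (C * Real.exp (-c * N)) := by
          rw [← ENNReal.ofReal_add (Real.exp_nonneg _) (Real.exp_nonneg _),
            ← ENNReal.ofReal_add (by positivity) (by positivity)]
          apply ENNReal.ofReal_le_ofReal
          have h1 : (1:ℝ) ≤ Real.exp (c * N₀) := Real.one_le_exp (by positivity)
          have h2 : Real.exp (-c * (N:ℝ)) + Real.exp (-c * (N:ℝ))
              + (Real.exp (-c * (N:ℝ)) + Real.exp (-c * (N:ℝ)))
              = 4 * Real.exp (-c * (N:ℝ)) := by ring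
          rw [hCdef, h2, mul_assoc]
          have h3 : (4:ℝ) ≤ 4 * Real.exp (c * N₀) := by linarith only [h1]
          exact mul_le_mul_of_nonneg_right h3 (Real.exp_nonneg _) |>.trans
            (le_of_eq (by ring))
end
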